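/- arXiv:2304.09841 — 5 statements merged into one kernel-verified Lean document; each statement's English description precedes it below -/
import Mathlib

section
/- Let k be a nonzero integer and c ∈ ℂ with c ∉ u([0,1]). Suppose φ : [0,1] → ℂ is a C² function that vanishes nowhere on [0,1] and satisfies the homogeneous distorted Rayleigh equation (u(y) − c) ∂_y( θ(y)^{-1} ∂_y φ(y) ) − (u(y) − c) k² θ(y)^{-1} φ(y) − (u'/θ)'(y) φ(y) = 0 on [0,1]. Then there exists a C² solution Φ of the same equation on [0,1] with Φ(0) = Φ(1) = 0 and Φ not identically zero if and only if ∫_0^1 θ(z)/φ(z)² dz = 0. -/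
open Set MeasureTheory

private lemma stmt4_eqn_iff (a K t d X Ψ : ℂ) (ha : a ≠ 0) :
    a * X - a * K * t * Ψ - d * Ψ = 0 ↔ X = (K * t + d * a⁻¹) * Ψ := by
  constructor
  · intro h
    field_simp
    linear_combination h
  · intro h
    rw [h]; field_simp; ring

private noncomputable def stmt4Q (u θ : ℝ → ℝ) (k : ℤ) (c : ℂ) : ℝ → ℂ := fun y =>
  (k:ℂ)^2 * (((θ y : ℝ) : ℂ))⁻¹
    + ((deriv (fun z => deriv u z / θ z) y : ℝ) : ℂ) * ((((u y : ℝ) : ℂ)) - c)⁻¹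

/-- for `c ∉ u([0,1])` and a nowhere-vanishing solution `φ` of the homogeneous
distorted Rayleigh equation, a nontrivial Dirichlet solution exists iff `∫ θ/φ² = 0`. -/
theorem stmt4
    (u θ : ℝ → ℝ) (c0 : ℝ) (hc0 : 0 < c0)
    (hu : ContDiff ℝ (⊤ : ℕ∞) u) (hθ : ContDiff ℝ (⊤ : ℕ∞) θ)
    (hu' : ∀ y ∈ Icc (0:ℝ) 1, c0 ≤ deriv u y)
    (hθc : ∀ y ∈ Icc (0:ℝ) 1, c0 ≤ θ y)
    (k : ℤ) (hk : k ≠ 0) (c : ℂ)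
    (hc : c ∉ (fun y => ((u y : ℝ) : ℂ)) '' Icc (0:ℝ) 1)
    (φ : ℝ → ℂ)
    (hφreg : ContDiffOn ℝ 2 φ (Icc (0:ℝ) 1))
    (hφne : ∀ y ∈ Icc (0:ℝ) 1, φ y ≠ 0)
    (hφeq : ∀ y ∈ Icc (0:ℝ) 1,
      (((u y : ℝ) : ℂ) - c) *
          derivWithin (fun z => (((θ z : ℝ) : ℂ))⁻¹ * derivWithin φ (Icc (0:ℝ) 1) z)
            (Icc (0:ℝ) 1) y
        - (((u y : ℝ) : ℂ) - c) * (k:ℂ)^2 * (((θ y : ℝ) : ℂ))⁻¹ * φ y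
        - ((deriv (fun z => deriv u z / θ z) y : ℝ) : ℂ) * φ y = 0) :
    (∃ Φ : ℝ → ℂ,
        ContDiffOn ℝ 2 Φ (Icc (0:ℝ) 1) ∧ Φ 0 = 0 ∧ Φ 1 = 0 ∧
        (∃ y ∈ Icc (0:ℝ) 1, Φ y ≠ 0) ∧
        (∀ y ∈ Icc (0:ℝ) 1,
          (((u y : ℝ) : ℂ) - c) *
              derivWithin (fun z => (((θ z : ℝ) : ℂ))⁻¹ * derivWithin Φ (Icc (0:ℝ) 1) z)
                (Icc (0:ℝ) 1) y
            - (((u y : ℝ) : ℂ) - c) * (k:ℂ)^2 * (((θ y : ℝ) : ℂ))⁻¹ * Φ y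
            - ((deriv (fun z => deriv u z / θ z) y : ℝ) : ℂ) * Φ y = 0))
      ↔ (∫ z in (0:ℝ)..1, ((θ z : ℝ) : ℂ) / (φ z)^2) = 0 := by
  have hS : UniqueDiffOn ℝ (Icc (0:ℝ) 1) := uniqueDiffOn_Icc one_pos
  set S : Set ℝ := Icc (0:ℝ) 1 with hSdef
  have h0S : (0:ℝ) ∈ S := left_mem_Icc.mpr zero_le_one
  have h1S : (1:ℝ) ∈ S := right_mem_Icc.mpr zero_le_one
  have hθne : ∀ y ∈ S, ((θ y : ℝ) : ℂ) ≠ 0 := fun y hy =>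
    Complex.ofReal_ne_zero.mpr (ne_of_gt (lt_of_lt_of_le hc0 (hθc y hy)))
  have hune : ∀ y ∈ S, ((u y : ℝ) : ℂ) - c ≠ 0 := fun y hy =>
    sub_ne_zero.mpr fun h => hc ⟨y, hy, h⟩
  have hθC : ContDiff ℝ (⊤:ℕ∞) (fun y => ((θ y : ℝ) : ℂ)) :=
    Complex.ofRealCLM.contDiff.comp hθ
  have hTop : (1 : WithTop ℕ∞) ≤ ((⊤:ℕ∞) : WithTop ℕ∞) := by exact_mod_cast le_top
  have htwo : (2 : WithTop ℕ∞) = 1 + 1 := by norm_num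
  have hθinv : DifferentiableOn ℝ (fun y => (((θ y : ℝ) : ℂ))⁻¹) S :=
    ((hθC.differentiable (by simp)).differentiableOn).inv hθne
  rw [htwo] at hφreg
  obtain ⟨hφd, -, hφ'C⟩ := (contDiffOn_succ_iff_derivWithin hS).mp hφreg
  have hφ'd : DifferentiableOn ℝ (derivWithin φ S) S := hφ'C.differentiableOn one_ne_zero
  have hPφd : DifferentiableOn ℝ (fun z => (((θ z : ℝ) : ℂ))⁻¹ * derivWithin φ S z) S :=
    hθinv.mul hφ'd
  -- reformulation of the equation
  have hiff : ∀ (Ψ : ℝ → ℂ), ∀ y ∈ S,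
      ((((u y : ℝ) : ℂ) - c) *
          derivWithin (fun z => (((θ z : ℝ) : ℂ))⁻¹ * derivWithin Ψ S z) S y
        - (((u y : ℝ) : ℂ) - c) * (k:ℂ)^2 * (((θ y : ℝ) : ℂ))⁻¹ * Ψ y
        - ((deriv (fun z => deriv u z / θ z) y : ℝ) : ℂ) * Ψ y = 0)
      ↔ derivWithin (fun z => (((θ z : ℝ) : ℂ))⁻¹ * derivWithin Ψ S z) S y
          = stmt4Q u θ k c y * Ψ y := by
    intro Ψ y hy
    exact stmt4_eqn_iff _ _ _ _ _ _ (hune y hy)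
  have hφq : ∀ y ∈ S,
      derivWithin (fun z => (((θ z : ℝ) : ℂ))⁻¹ * derivWithin φ S z) S y
        = stmt4Q u θ k c y * φ y := fun y hy => (hiff φ y hy).mp (hφeq y hy)
  constructor
  · -- forward direction
    rintro ⟨Φ, hΦreg, hΦ0, hΦ1, ⟨y0, hy0, hy0ne⟩, hΦode⟩
    rw [htwo] at hΦreg
    obtain ⟨hΦd, -, hΦ'C⟩ := (contDiffOn_succ_iff_derivWithin hS).mp hΦreg
    have hΦ'd : DifferentiableOn ℝ (derivWithin Φ S) S := hΦ'C.differentiableOn one_ne_zero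
    have hPΦd : DifferentiableOn ℝ (fun z => (((θ z : ℝ) : ℂ))⁻¹ * derivWithin Φ S z) S :=
      hθinv.mul hΦ'd
    have hΦq : ∀ y ∈ S,
        derivWithin (fun z => (((θ z : ℝ) : ℂ))⁻¹ * derivWithin Φ S z) S y
          = stmt4Q u θ k c y * Φ y := fun y hy => (hiff Φ y hy).mp (hΦode y hy)
    set W : ℝ → ℂ := fun y => φ y * ((((θ y : ℝ) : ℂ))⁻¹ * derivWithin Φ S y)
        - Φ y * ((((θ y : ℝ) : ℂ))⁻¹ * derivWithin φ S y) with hWdef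
    have hW0 : ∀ y ∈ S, HasDerivWithinAt W 0 S y := by
      intro y hy
      have hA : HasDerivWithinAt
          (fun z => (((θ z : ℝ) : ℂ))⁻¹ * derivWithin Φ S z)
          (stmt4Q u θ k c y * Φ y) S y := by
        have h := (hPΦd y hy).hasDerivWithinAt
        rwa [hΦq y hy] at h
      have hB : HasDerivWithinAt
          (fun z => (((θ z : ℝ) : ℂ))⁻¹ * derivWithin φ S z)
          (stmt4Q u θ k c y * φ y) S y := by
        have h := (hPφd y hy).hasDerivWithinAt
        rwa [hφq y hy] at h
      have h1 := ((hφd y hy).hasDerivWithinAt.mul hA).sub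
        ((hΦd y hy).hasDerivWithinAt.mul hB)
      have hval : derivWithin φ S y * ((((θ y : ℝ) : ℂ))⁻¹ * derivWithin Φ S y)
            + φ y * (stmt4Q u θ k c y * Φ y)
          - (derivWithin Φ S y * ((((θ y : ℝ) : ℂ))⁻¹ * derivWithin φ S y)
            + Φ y * (stmt4Q u θ k c y * φ y)) = 0 := by ring
      rwa [hval] at h1
    have hWd : DifferentiableOn ℝ W S := fun y hy => (hW0 y hy).differentiableWithinAt
    have hWc : ∀ y ∈ S, W y = W 0 := by
      intro y hy
      refine (convex_Icc (0:ℝ) 1).is_const_of_fderivWithin_eq_zero hWd ?_ hy h0S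
      intro x hx
      have h := (hW0 x hx).hasFDerivWithinAt.fderivWithin (hS x hx)
      rw [h]
      ext1
      simp
    -- derivative of Φ/φ
    have hhd : ∀ y ∈ S, HasDerivWithinAt (fun z => Φ z / φ z)
        (((θ y : ℝ) : ℂ) * W 0 / φ y ^ 2) S y := by
      intro y hy
      have h1 : HasDerivWithinAt (fun z => Φ z / φ z)
          ((derivWithin Φ S y * φ y - Φ y * derivWithin φ S y) / φ y ^ 2) S y :=
        (hΦd y hy).hasDerivWithinAt.div (hφd y hy).hasDerivWithinAt (hφne y hy)
      have h2 : ((θ y : ℝ) : ℂ) * W 0 / φ y ^ 2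
          = (derivWithin Φ S y * φ y - Φ y * derivWithin φ S y) / φ y ^ 2 := by
        rw [← hWc y hy, hWdef]
        have hθy := hθne y hy
        have hφy := hφne y hy
        field_simp
      rwa [h2]
    have hcontW : ContinuousOn (fun z => ((θ z : ℝ) : ℂ) * W 0 / φ z ^ 2) S :=
      ((hθC.continuous.continuousOn.mul continuousOn_const).div
        ((hφreg.continuousOn).pow 2) (fun z hz => pow_ne_zero 2 (hφne z hz)))
    have hFTC : ∫ z in (0:ℝ)..1, ((θ z : ℝ) : ℂ) * W 0 / φ z ^ 2
        = Φ 1 / φ 1 - Φ 0 / φ 0 := by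
      apply intervalIntegral.integral_eq_sub_of_hasDeriv_right_of_le (f := fun z => Φ z / φ z)
        (f' := fun z => ((θ z : ℝ) : ℂ) * W 0 / φ z ^ 2) zero_le_one
      · exact (hΦreg.continuousOn).div (hφreg.continuousOn) hφne
      · intro x hx
        have hx' : x ∈ S := Ioo_subset_Icc_self hx
        exact ((hhd x hx').hasDerivAt (Icc_mem_nhds hx.1 hx.2)).hasDerivWithinAt
      · apply ContinuousOn.intervalIntegrable
        rw [uIcc_of_le zero_le_one]
        exact hcontW
    have hsplit : ∫ z in (0:ℝ)..1, ((θ z : ℝ) : ℂ) * W 0 / φ z ^ 2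
        = W 0 * ∫ z in (0:ℝ)..1, ((θ z : ℝ) : ℂ) / φ z ^ 2 := by
      rw [← intervalIntegral.integral_const_mul]
      apply intervalIntegral.integral_congr
      intro z hz
      ring
    have hW0I : W 0 * ∫ z in (0:ℝ)..1, ((θ z : ℝ) : ℂ) / φ z ^ 2 = 0 := by
      rw [← hsplit, hFTC, hΦ0, hΦ1]
      simp
    rcases mul_eq_zero.mp hW0I with h | h
    · exfalso
      have hzero : Φ y0 / φ y0 = Φ 0 / φ 0 := by
        refine (convex_Icc (0:ℝ) 1).is_const_of_fderivWithin_eq_zero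
          (f := fun z => Φ z / φ z)
          (fun z hz => (hhd z hz).differentiableWithinAt) ?_ hy0 h0S
        intro x hx
        have h0 : HasDerivWithinAt (fun z => Φ z / φ z) 0 S x := by
          have h1 := hhd x hx
          rwa [h, mul_zero, zero_div] at h1
        have h2 := h0.hasFDerivWithinAt.fderivWithin (hS x hx)
        rw [h2]
        ext1
        simp
      rw [hΦ0, zero_div] at hzero
      rcases div_eq_zero_iff.mp hzero with h' | h'
      · exact hy0ne h'
      · exact hφne y0 hy0 h'
    · exact h
  · -- backward direction
    intro hI
    have hmS : ∀ z : ℝ, max 0 (min z 1) ∈ S := fun z =>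
      ⟨le_max_left _ _, max_le zero_le_one (min_le_right _ _)⟩
    have hmid : ∀ z ∈ S, max 0 (min z 1) = z := by
      intro z hz
      rw [min_eq_left hz.2, max_eq_right hz.1]
    have hφm : Continuous fun z => φ (max 0 (min z 1)) :=
      hφreg.continuousOn.comp_continuous
        (continuous_const.max (continuous_id.min continuous_const)) hmS
    have hFc : Continuous fun z => ((θ z : ℝ) : ℂ) / φ (max 0 (min z 1)) ^ 2 :=
      (Complex.continuous_ofReal.comp hθ.continuous).div (hφm.pow 2)
        (fun z => pow_ne_zero 2 (hφne _ (hmS z)))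
    set g : ℝ → ℂ := fun y => ∫ t in (0:ℝ)..y, ((θ t : ℝ) : ℂ) / φ (max 0 (min t 1)) ^ 2
      with hgdef
    have hgder : ∀ y : ℝ, HasDerivAt g (((θ y : ℝ) : ℂ) / φ (max 0 (min y 1)) ^ 2) y := by
      intro y
      exact intervalIntegral.integral_hasDerivAt_right (hFc.intervalIntegrable 0 y)
        (hFc.stronglyMeasurable.stronglyMeasurableAtFilter) hFc.continuousAt
    have hgd : ∀ y ∈ S, derivWithin g S y = ((θ y : ℝ) : ℂ) / φ y ^ 2 := by
      intro y hy
      have := ((hgder y).hasDerivWithinAt).derivWithin (hS y hy)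
      rwa [hmid y hy] at this
    have hgdiff : ∀ y ∈ S, DifferentiableWithinAt ℝ g S y := fun y hy =>
      (hgder y).differentiableAt.differentiableWithinAt
    have hg0 : g 0 = 0 := intervalIntegral.integral_same
    have hg1 : g 1 = 0 := by
      have heq : EqOn (fun t => ((θ t : ℝ) : ℂ) / φ (max 0 (min t 1)) ^ 2)
          (fun z => ((θ z : ℝ) : ℂ) / (φ z) ^ 2) (uIcc (0:ℝ) 1) := by
        intro z hz
        rw [uIcc_of_le zero_le_one] at hz
        simp only
        rw [hmid z hz]
      calc g 1 = ∫ z in (0:ℝ)..1, ((θ z : ℝ) : ℂ) / (φ z) ^ 2 :=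
            intervalIntegral.integral_congr heq
        _ = 0 := hI
    have hgC : ContDiffOn ℝ ((1:WithTop ℕ∞)+1) g S := by
      rw [contDiffOn_succ_iff_derivWithin hS]
      refine ⟨fun y hy => hgdiff y hy, by simp, ?_⟩
      have hnice : ContDiffOn ℝ 1 (fun z => ((θ z : ℝ) : ℂ) / (φ z) ^ 2) S := by
        have h1 : ContDiffOn ℝ 1 (fun z => ((θ z : ℝ) : ℂ) * ((φ z) ^ 2)⁻¹) S :=
          ((hθC.of_le hTop).contDiffOn).mul
            (((hφreg.of_le (by norm_num)).pow 2).inv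
              (fun z hz => pow_ne_zero 2 (hφne z hz)))
        exact h1.congr (fun y hy => div_eq_mul_inv _ _)
      exact hnice.congr (fun y hy => hgd y hy)
    refine ⟨fun y => φ y * g y, ?_, ?_, ?_, ?_, ?_⟩
    · rw [htwo]
      exact hφreg.mul hgC
    · show φ 0 * g 0 = 0
      rw [hg0, mul_zero]
    · show φ 1 * g 1 = 0
      rw [hg1, mul_zero]
    · -- nontrivial
      by_contra hcon
      push_neg at hcon
      have hgz : ∀ y ∈ S, g y = 0 := by
        intro y hy
        rcases mul_eq_zero.mp (hcon y hy) with h | h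
        · exact absurd h (hφne y hy)
        · exact h
      have h0 : derivWithin g S 0 = 0 := by
        rw [derivWithin_congr hgz (hgz 0 h0S)]
        exact congrFun (derivWithin_fun_const S (0:ℂ)) 0
      rw [hgd 0 h0S] at h0
      exact (div_ne_zero (hθne 0 h0S) (pow_ne_zero 2 (hφne 0 h0S))) h0
    · -- the equation
      intro y hy
      refine (hiff (fun w => φ w * g w) y hy).mpr ?_
      have hΦ' : ∀ z ∈ S, derivWithin (fun w => φ w * g w) S z
          = derivWithin φ S z * g z + φ z * (((θ z : ℝ) : ℂ) / φ z ^ 2) := by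
        intro z hz
        have h := ((hφd z hz).hasDerivWithinAt.mul
          (hgder z).hasDerivWithinAt).derivWithin (hS z hz)
        rwa [hmid z hz] at h
      have hEq2 : EqOn (fun z => (((θ z : ℝ) : ℂ))⁻¹ * derivWithin (fun w => φ w * g w) S z)
          (fun z => ((((θ z : ℝ) : ℂ))⁻¹ * derivWithin φ S z) * g z + (φ z)⁻¹) S := by
        intro z hz
        simp only
        rw [hΦ' z hz]
        have hθz := hθne z hz
        have hφz := hφne z hz
        field_simp
      rw [derivWithin_congr hEq2 (hEq2 hy)]
      have hsum : HasDerivWithinAt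
          (fun z => ((((θ z : ℝ) : ℂ))⁻¹ * derivWithin φ S z) * g z + (φ z)⁻¹)
          ((stmt4Q u θ k c y * φ y) * g y
            + ((((θ y : ℝ) : ℂ))⁻¹ * derivWithin φ S y)
                * (((θ y : ℝ) : ℂ) / φ (max 0 (min y 1)) ^ 2)
            + (-derivWithin φ S y / φ y ^ 2)) S y := by
        refine HasDerivWithinAt.add ?_ ?_
        · have hP : HasDerivWithinAt
              (fun z => (((θ z : ℝ) : ℂ))⁻¹ * derivWithin φ S z)
              (stmt4Q u θ k c y * φ y) S y := by
            have hh := (hPφd y hy).hasDerivWithinAt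
            rwa [hφq y hy] at hh
          exact hP.mul (hgder y).hasDerivWithinAt
        · have h := (hasDerivWithinAt_const y S (1:ℂ)).fun_div
            (hφd y hy).hasDerivWithinAt (hφne y hy)
          simp only [one_div] at h
          have hv : (0 * φ y - 1 * derivWithin φ S y) / φ y ^ 2
              = -derivWithin φ S y / φ y ^ 2 := by ring
          rwa [hv] at h
      rw [hsum.derivWithin (hS y hy), hmid y hy]
      have hθy := hθne y hy
      have hφy := hφne y hy
      field_simp
      ring
end

section
/- Let k be a nonzero integer and y' ∈ [0,1]. Suppose Φ : [0,1] → ℂ is a C² function, not identically zero, with Φ(0) = Φ(1) = 0, satisfying (u(y) − u(y')) [ ∂_y( θ(y)^{-1} ∂_y Φ(y) ) − k² θ(y)^{-1} Φ(y) ] = (u'/θ)'(y) Φ(y) for all y ∈ [0,1]. Then (u'/θ)'(y') = 0. -/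
open Set MeasureTheory

open Filter Topology
/-- slope sign: right endpoint -/
private lemma deriv_nonneg_right {f : ℝ → ℝ} {d a t : ℝ} (hat : a < t)
    (hd : HasDerivWithinAt f d (Icc a t) a) (h0 : f a = 0)
    (hpos : ∀ z ∈ Ioc a t, 0 ≤ f z) : 0 ≤ d := by
  rw [hasDerivWithinAt_iff_tendsto_slope] at hd
  have hs : Icc a t \ {a} = Ioc a t := by ext z; simp [mem_Icc, mem_Ioc]
  rw [hs] at hd
  have hne : (𝓝[Ioc a t] a).NeBot := by
    refine mem_closure_iff_nhdsWithin_neBot.mp ?_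
    rw [closure_Ioc hat.ne]
    exact ⟨le_rfl, hat.le⟩
  refine ge_of_tendsto hd ?_
  filter_upwards [self_mem_nhdsWithin] with z hz
  rw [slope_def_field, h0, sub_zero]
  exact div_nonneg (hpos z hz) (by linarith [hz.1])

/-- slope sign: left endpoint -/
private lemma deriv_nonpos_left {f : ℝ → ℝ} {d s b : ℝ} (hsb : s < b)
    (hd : HasDerivWithinAt f d (Icc s b) b) (h0 : f b = 0)
    (hpos : ∀ z ∈ Ico s b, 0 ≤ f z) : d ≤ 0 := by
  rw [hasDerivWithinAt_iff_tendsto_slope] at hd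
  have hs : Icc s b \ {b} = Ico s b := by ext z; simp [mem_Icc, mem_Ico]
  rw [hs] at hd
  have hne : (𝓝[Ico s b] b).NeBot := by
    refine mem_closure_iff_nhdsWithin_neBot.mp ?_
    rw [closure_Ico hsb.ne]
    exact ⟨hsb.le, le_rfl⟩
  refine le_of_tendsto hd ?_
  filter_upwards [self_mem_nhdsWithin] with z hz
  rw [slope_def_field, h0, sub_zero]
  exact div_nonpos_of_nonneg_of_nonpos (hpos z hz) (by linarith [hz.2])

set_option maxHeartbeats 1000000 in
private lemma no_pos
    (u θ : ℝ → ℝ) (c0 : ℝ) (hc0 : 0 < c0)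
    (hu : ContDiff ℝ (⊤ : ℕ∞) u)
    (hu' : ∀ y ∈ Icc (0:ℝ) 1, c0 ≤ deriv u y)
    (hθc : ∀ y ∈ Icc (0:ℝ) 1, c0 ≤ θ y)
    (y' : ℝ) (hy' : y' ∈ Icc (0:ℝ) 1)
    (K : ℝ) (hK : 0 < K) (f Fd : ℝ → ℝ)
    (hf : ∀ y ∈ Icc (0:ℝ) 1, HasDerivWithinAt f (Fd y) (Icc (0:ℝ) 1) y)
    (hG : ∀ y ∈ Icc (0:ℝ) 1, HasDerivWithinAt
      (fun z => (u z - u y') * (θ z)⁻¹ * Fd z - (deriv u z / θ z) * f z)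
      (K * (θ y)⁻¹ * (u y - u y') * f y) (Icc (0:ℝ) 1) y)
    (hf0 : f 0 = 0) (hf1 : f 1 = 0) (hfy : f y' = 0)
    (y₀ : ℝ) (hy₀ : y₀ ∈ Icc (0:ℝ) 1) (hpos : 0 < f y₀ / (u y₀ - u y')) :
    False := by
  set G : ℝ → ℝ := fun z => (u z - u y') * (θ z)⁻¹ * Fd z - (deriv u z / θ z) * f z with hGdef
  have hθpos : ∀ y ∈ Icc (0:ℝ) 1, 0 < θ y := fun y hy => lt_of_lt_of_le hc0 (hθc y hy)
  have husm : StrictMonoOn u (Icc (0:ℝ) 1) :=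
    strictMonoOn_of_deriv_pos (convex_Icc 0 1) hu.continuous.continuousOn
      (fun x hx => lt_of_lt_of_le hc0 (hu' x (interior_subset hx)))
  have hup : ∀ y ∈ Icc (0:ℝ) 1, y' < y → 0 < u y - u y' := fun y hy h => sub_pos.mpr (husm hy' hy h)
  have hun : ∀ y ∈ Icc (0:ℝ) 1, y < y' → u y - u y' < 0 := fun y hy h => sub_neg.mpr (husm hy hy' h)
  have hune : ∀ y ∈ Icc (0:ℝ) 1, y ≠ y' → u y - u y' ≠ 0 := by
    intro y hy h
    rcases lt_or_gt_of_ne h with h' | h'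
    · exact (hun y hy h').ne
    · exact (hup y hy h').ne'
  have hy₀ne : y₀ ≠ y' := by
    intro h; rw [h, hfy] at hpos; simp at hpos
  set ψ : ℝ → ℝ := fun z => if z = y' then Fd y' / deriv u y' else f z / (u z - u y') with hψdef
  have hψeq : ∀ z, z ≠ y' → ψ z = f z / (u z - u y') := fun z hz => if_neg hz
  have hfψ : ∀ z ∈ Icc (0:ℝ) 1, z ≠ y' → f z = ψ z * (u z - u y') := by
    intro z hz hzne; rw [hψeq z hzne, div_mul_cancel₀]; exact hune z hz hzne
  have hψy₀ : 0 < ψ y₀ := by rw [hψeq y₀ hy₀ne]; exact hpos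
  have hfcont : ContinuousOn f (Icc (0:ℝ) 1) := fun y hy => (hf y hy).continuousWithinAt
  have hGcont : ContinuousOn G (Icc (0:ℝ) 1) := fun y hy => (hG y hy).continuousWithinAt
  have hdivq : ∀ A B e : ℝ, e ≠ 0 → (A/e)/(B/e) = A/B := by
    intro A B e he
    rcases eq_or_ne B 0 with h | h
    · simp [h]
    · field_simp
  have hψcont : ContinuousOn ψ (Icc (0:ℝ) 1) := by
    intro y hy
    by_cases hyy : y = y'
    · subst hyy
      rw [← continuousWithinAt_diff_self]
      have hslf := hasDerivWithinAt_iff_tendsto_slope.mp (hf y hy)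
      have hslu := hasDerivWithinAt_iff_tendsto_slope.mp
        (((hu.differentiable (by simp)) y).hasDerivAt.hasDerivWithinAt (s := Icc (0:ℝ) 1))
      have hu'pos : (0:ℝ) < deriv u y := lt_of_lt_of_le hc0 (hu' y hy)
      have hdiv := hslf.div hslu hu'pos.ne'
      show Tendsto ψ (𝓝[Icc (0:ℝ) 1 \ {y}] y) (𝓝 (ψ y))
      have hval : ψ y = Fd y / deriv u y := if_pos rfl
      rw [hval]
      refine Filter.Tendsto.congr' ?_ hdiv
      filter_upwards [self_mem_nhdsWithin] with z hz
      have hz' : z ≠ y := by simpa using hz.2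
      simp only [Pi.div_apply]
      rw [hψeq z hz', slope_def_field, slope_def_field, hfy, sub_zero]
      exact hdivq _ _ _ (sub_ne_zero.mpr hz')
    · have h1 : ContinuousWithinAt (fun z => f z / (u z - u y')) (Icc (0:ℝ) 1) y :=
        (hfcont y hy).div ((hu.continuous.continuousWithinAt).sub continuousWithinAt_const)
          (hune y hy hyy)
      refine h1.congr_of_eventuallyEq ?_ (hψeq y hyy)
      filter_upwards [Filter.Eventually.filter_mono nhdsWithin_le_nhds (eventually_ne_nhds hyy)]
        with z hz
      exact hψeq z hz
  -- left side
  have ha_side : ∃ a, a ∈ Icc (0:ℝ) 1 ∧ a < y₀ ∧ (∀ z, a < z → z ≤ y₀ → 0 < ψ z)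
      ∧ 0 ≤ ψ a ∧ 0 ≤ G a := by
    by_cases hSa : ∃ z ∈ Icc 0 y₀, ψ z ≤ 0
    · obtain ⟨z₀, hz₀, hz₀ψ⟩ := hSa
      set Sa := Icc 0 y₀ ∩ ψ ⁻¹' Iic 0 with hSadef
      have hIccsub : Icc 0 y₀ ⊆ Icc (0:ℝ) 1 := Icc_subset_Icc le_rfl hy₀.2
      have hclosed : IsClosed Sa :=
        (hψcont.mono hIccsub).preimage_isClosed_of_isClosed isClosed_Icc isClosed_Iic
      have hcomp : IsCompact Sa := isCompact_Icc.of_isClosed_subset hclosed inter_subset_left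
      have hSane : Sa.Nonempty := ⟨z₀, hz₀, hz₀ψ⟩
      set a := sSup Sa with hadef
      have haSa : a ∈ Sa := hcomp.sSup_mem hSane
      have haub : ∀ z ∈ Sa, z ≤ a := fun z hz => le_csSup hcomp.bddAbove hz
      have haIcc : a ∈ Icc 0 y₀ := haSa.1
      have haψ : ψ a ≤ 0 := haSa.2
      have haI : a ∈ Icc (0:ℝ) 1 := hIccsub haIcc
      have hay₀ : a < y₀ := lt_of_le_of_ne haIcc.2 (fun h => by rw [h] at haψ; linarith)
      have hA2 : ∀ z, a < z → z ≤ y₀ → 0 < ψ z := by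
        intro z h1 h2
        by_contra h
        push_neg at h
        have hz : z ∈ Sa := ⟨⟨le_trans haIcc.1 h1.le, h2⟩, h⟩
        exact absurd (haub z hz) (not_le.mpr h1)
      have haψ0 : ψ a = 0 := by
        refine le_antisymm haψ ?_
        have hneb : (𝓝[Ioc a y₀] a).NeBot := by
          refine mem_closure_iff_nhdsWithin_neBot.mp ?_
          rw [closure_Ioc hay₀.ne]
          exact ⟨le_rfl, hay₀.le⟩
        have htd : Tendsto ψ (𝓝[Ioc a y₀] a) (𝓝 (ψ a)) :=
          (hψcont a haI).mono (fun z hz => ⟨le_trans haI.1 hz.1.le, le_trans hz.2 hy₀.2⟩)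
        refine ge_of_tendsto htd ?_
        filter_upwards [self_mem_nhdsWithin] with z hz
        exact (hA2 z hz.1 hz.2).le
      refine ⟨a, haI, hay₀, hA2, haψ0.ge, ?_⟩
      by_cases hay' : a = y'
      · have hGa0 : G a = 0 := by
          simp only [hGdef, hay', sub_self, hfy, zero_mul, mul_zero, sub_zero]
        rw [hGa0]
      · have hfa : f a = 0 := by
          have h1 := hψeq a hay'
          rw [haψ0] at h1
          rcases div_eq_zero_iff.mp h1.symm with h | h
          · exact h
          · exact absurd h (hune a haI hay')
        have hGa : G a = (u a - u y') * (θ a)⁻¹ * Fd a := by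
          simp [hGdef, hfa]
        rcases lt_or_gt_of_ne hay' with h | h
        · -- a < y'
          set t := min y' y₀ with htdef
          have hat : a < t := lt_min h hay₀
          have htI : Icc a t ⊆ Icc (0:ℝ) 1 :=
            Icc_subset_Icc haI.1 (le_trans (min_le_right _ _) hy₀.2)
          have hFd : Fd a ≤ 0 := by
            have hneg : (0:ℝ) ≤ -Fd a := by
              refine deriv_nonneg_right hat ((hf a haI).neg.mono htI) (by simp [hfa]) ?_
              intro z hz
              have hzI : z ∈ Icc (0:ℝ) 1 := htI ⟨hz.1.le, hz.2⟩
              show (0:ℝ) ≤ -f z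
              rcases eq_or_ne z y' with hzy | hzy
              · simp [hzy, hfy]
              · have hψz : 0 < ψ z := hA2 z hz.1 (le_trans hz.2 (min_le_right _ _))
                have hzlt : z < y' := lt_of_le_of_ne (le_trans hz.2 (min_le_left _ _)) hzy
                have hfz := hfψ z hzI hzy
                nlinarith [hun z hzI hzlt]
            linarith
          rw [hGa]
          have h1 : u a - u y' < 0 := hun a haI h
          have h2 : (0:ℝ) < (θ a)⁻¹ := inv_pos.mpr (hθpos a haI)
          nlinarith [mul_nonneg (mul_nonneg (neg_nonneg.mpr h1.le) h2.le) (neg_nonneg.mpr hFd)]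
        · -- a > y'
          have hFd : 0 ≤ Fd a := by
            refine deriv_nonneg_right hay₀ ((hf a haI).mono (Icc_subset_Icc haI.1 hy₀.2)) hfa ?_
            intro z hz
            have hzI : z ∈ Icc (0:ℝ) 1 := Icc_subset_Icc haI.1 hy₀.2 ⟨hz.1.le, hz.2⟩
            have hψz : 0 < ψ z := hA2 z hz.1 hz.2
            have hzgt : y' < z := lt_trans h hz.1
            have hfz := hfψ z hzI (ne_of_gt hzgt)
            nlinarith [hup z hzI hzgt]
          rw [hGa]
          have h1 : 0 < u a - u y' := hup a haI h
          have h2 : (0:ℝ) ≤ (θ a)⁻¹ := (inv_pos.mpr (hθpos a haI)).le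
          exact mul_nonneg (mul_nonneg h1.le h2) hFd
    · push_neg at hSa
      have h0y₀ : (0:ℝ) ∈ Icc 0 y₀ := ⟨le_rfl, hy₀.1⟩
      have hy'0 : y' = 0 := by
        by_contra h
        have hψ0 : ψ 0 = 0 := by
          rw [hψeq 0 (fun hh => h hh.symm), hf0, zero_div]
        linarith [hSa 0 h0y₀]
      have hy₀pos : 0 < y₀ :=
        lt_of_le_of_ne hy₀.1 (fun hh => hy₀ne (by rw [← hh, hy'0]))
      refine ⟨0, ⟨le_rfl, zero_le_one⟩, hy₀pos, fun z h1 h2 => hSa z ⟨h1.le, h2⟩,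
        (hSa 0 h0y₀).le, ?_⟩
      have hGa0 : G 0 = 0 := by
        simp only [hGdef, hy'0, sub_self, hf0, zero_mul, mul_zero, sub_zero]
      rw [hGa0]
  -- right side
  have hb_side : ∃ b, b ∈ Icc (0:ℝ) 1 ∧ y₀ < b ∧ (∀ z, y₀ ≤ z → z < b → 0 < ψ z)
      ∧ 0 ≤ ψ b ∧ G b ≤ 0 := by
    by_cases hSb : ∃ z ∈ Icc y₀ 1, ψ z ≤ 0
    · obtain ⟨z₀, hz₀, hz₀ψ⟩ := hSb
      set Sb := Icc y₀ 1 ∩ ψ ⁻¹' Iic 0 with hSbdef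
      have hIccsub : Icc y₀ 1 ⊆ Icc (0:ℝ) 1 := Icc_subset_Icc hy₀.1 le_rfl
      have hclosed : IsClosed Sb :=
        (hψcont.mono hIccsub).preimage_isClosed_of_isClosed isClosed_Icc isClosed_Iic
      have hcomp : IsCompact Sb := isCompact_Icc.of_isClosed_subset hclosed inter_subset_left
      have hSbne : Sb.Nonempty := ⟨z₀, hz₀, hz₀ψ⟩
      set b := sInf Sb with hbdef
      have hbSb : b ∈ Sb := hcomp.sInf_mem hSbne
      have hblb : ∀ z ∈ Sb, b ≤ z := fun z hz => csInf_le hcomp.bddBelow hz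
      have hbIcc : b ∈ Icc y₀ 1 := hbSb.1
      have hbψ : ψ b ≤ 0 := hbSb.2
      have hbI : b ∈ Icc (0:ℝ) 1 := hIccsub hbIcc
      have hy₀b : y₀ < b := lt_of_le_of_ne hbIcc.1 (fun h => by rw [← h] at hbψ; linarith)
      have hB2 : ∀ z, y₀ ≤ z → z < b → 0 < ψ z := by
        intro z h1 h2
        by_contra h
        push_neg at h
        have hz : z ∈ Sb := ⟨⟨h1, le_trans h2.le hbIcc.2⟩, h⟩
        exact absurd (hblb z hz) (not_le.mpr h2)
      have hbψ0 : ψ b = 0 := by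
        refine le_antisymm hbψ ?_
        have hneb : (𝓝[Ico y₀ b] b).NeBot := by
          refine mem_closure_iff_nhdsWithin_neBot.mp ?_
          rw [closure_Ico hy₀b.ne]
          exact ⟨hy₀b.le, le_rfl⟩
        have htd : Tendsto ψ (𝓝[Ico y₀ b] b) (𝓝 (ψ b)) :=
          (hψcont b hbI).mono (fun z hz => ⟨le_trans hy₀.1 hz.1, le_trans hz.2.le hbI.2⟩)
        refine ge_of_tendsto htd ?_
        filter_upwards [self_mem_nhdsWithin] with z hz
        exact (hB2 z hz.1 hz.2).le
      refine ⟨b, hbI, hy₀b, hB2, hbψ0.ge, ?_⟩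
      by_cases hby' : b = y'
      · have hGb0 : G b = 0 := by
          simp only [hGdef, hby', sub_self, hfy, zero_mul, mul_zero, sub_zero]
        rw [hGb0]
      · have hfb : f b = 0 := by
          have h1 := hψeq b hby'
          rw [hbψ0] at h1
          rcases div_eq_zero_iff.mp h1.symm with h | h
          · exact h
          · exact absurd h (hune b hbI hby')
        have hGb : G b = (u b - u y') * (θ b)⁻¹ * Fd b := by
          simp [hGdef, hfb]
        rcases lt_or_gt_of_ne hby' with h | h
        · -- b < y' : on [y₀, b), z < y', ψ > 0 so f ≤ 0; thus Fd b ≥ 0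
          have hFd : 0 ≤ Fd b := by
            have hneg : -Fd b ≤ (0:ℝ) := by
              refine deriv_nonpos_left hy₀b ((hf b hbI).neg.mono (Icc_subset_Icc hy₀.1 hbI.2))
                (by simp [hfb]) ?_
              intro z hz
              have hzI : z ∈ Icc (0:ℝ) 1 := Icc_subset_Icc hy₀.1 hbI.2 ⟨hz.1, hz.2.le⟩
              show (0:ℝ) ≤ -f z
              have hψz : 0 < ψ z := hB2 z hz.1 hz.2
              have hzlt : z < y' := lt_trans hz.2 h
              have hfz := hfψ z hzI hzlt.ne
              nlinarith [hun z hzI hzlt]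
            linarith
          rw [hGb]
          have h1 : u b - u y' < 0 := hun b hbI h
          have h2 : (0:ℝ) < (θ b)⁻¹ := inv_pos.mpr (hθpos b hbI)
          nlinarith [mul_nonneg (mul_nonneg (neg_nonneg.mpr h1.le) h2.le) hFd]
        · -- b > y' : on [s, b) with s = max y' y₀, f ≥ 0; thus Fd b ≤ 0
          set s := max y' y₀ with hsdef
          have hsb : s < b := max_lt h hy₀b
          have hsI : Icc s b ⊆ Icc (0:ℝ) 1 :=
            Icc_subset_Icc (le_trans hy₀.1 (le_max_right _ _)) hbI.2
          have hFd : Fd b ≤ 0 := by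
            refine deriv_nonpos_left hsb ((hf b hbI).mono hsI) hfb ?_
            intro z hz
            have hzI : z ∈ Icc (0:ℝ) 1 := hsI ⟨hz.1, hz.2.le⟩
            have hψz : 0 < ψ z := hB2 z (le_trans (le_max_right _ _) hz.1) hz.2
            rcases eq_or_ne z y' with hzy | hzy
            · simp [hzy, hfy]
            · have hψz : 0 < ψ z := hB2 z (le_trans (le_max_right _ _) hz.1) hz.2
              have hzgt : y' < z := lt_of_le_of_ne (le_trans (le_max_left _ _) hz.1) (Ne.symm hzy)
              have hfz := hfψ z hzI hzy
              nlinarith [hup z hzI hzgt]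
          rw [hGb]
          have h1 : 0 < u b - u y' := hup b hbI h
          have h2 : (0:ℝ) ≤ (θ b)⁻¹ := (inv_pos.mpr (hθpos b hbI)).le
          nlinarith [mul_nonneg (mul_nonneg h1.le h2) (neg_nonneg.mpr hFd)]
    · push_neg at hSb
      have h1y₀ : (1:ℝ) ∈ Icc y₀ 1 := ⟨hy₀.2, le_rfl⟩
      have hy'1 : y' = 1 := by
        by_contra h
        have hψ1 : ψ 1 = 0 := by
          rw [hψeq 1 (fun hh => h hh.symm), hf1, zero_div]
        linarith [hSb 1 h1y₀]
      have hy₀lt : y₀ < 1 := lt_of_le_of_ne hy₀.2 (fun hh => hy₀ne (by rw [hh, hy'1]))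
      refine ⟨1, ⟨zero_le_one, le_rfl⟩, hy₀lt, fun z h1 h2 => hSb z ⟨h1, h2.le⟩,
        (hSb 1 h1y₀).le, ?_⟩
      have hGb0 : G 1 = 0 := by
        simp only [hGdef, hy'1, sub_self, hf1, zero_mul, mul_zero, sub_zero]
      rw [hGb0]
  -- combine
  obtain ⟨a, haI, hay₀, hA2, hψa, hGa⟩ := ha_side
  obtain ⟨b, hbI, hy₀b, hB2, hψb, hGb⟩ := hb_side
  have hab : a < b := lt_trans hay₀ hy₀b
  have habI : Icc a b ⊆ Icc (0:ℝ) 1 := Icc_subset_Icc haI.1 hbI.2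
  have hψnn : ∀ z ∈ Icc a b, 0 ≤ ψ z := by
    intro z hz
    rcases eq_or_ne z a with h | h
    · rw [h]; exact hψa
    rcases eq_or_ne z b with h' | h'
    · rw [h']; exact hψb
    rcases le_or_gt z y₀ with h2 | h2
    · exact (hA2 z (lt_of_le_of_ne hz.1 (Ne.symm h)) h2).le
    · exact (hB2 z h2.le (lt_of_le_of_ne hz.2 h')).le
  have hGderiv : ∀ z ∈ Ioo a b, HasDerivAt G (K * (θ z)⁻¹ * (u z - u y') * f z) z := by
    intro z hz
    have hzI : z ∈ Icc (0:ℝ) 1 := habI (Ioo_subset_Icc_self hz)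
    have hmem : Icc (0:ℝ) 1 ∈ 𝓝 z :=
      Icc_mem_nhds (lt_of_le_of_lt haI.1 hz.1) (lt_of_lt_of_le hz.2 hbI.2)
    exact (hG z hzI).hasDerivAt hmem
  have hGnn : ∀ z ∈ Ioo a b, 0 ≤ K * (θ z)⁻¹ * (u z - u y') * f z := by
    intro z hz
    have hzI : z ∈ Icc (0:ℝ) 1 := habI (Ioo_subset_Icc_self hz)
    rcases eq_or_ne z y' with h | h
    · simp [h, hfy]
    · have hfz := hfψ z hzI h
      have hψz : 0 ≤ ψ z := hψnn z (Ioo_subset_Icc_self hz)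
      have hθ' : 0 < (θ z)⁻¹ := inv_pos.mpr (hθpos z hzI)
      rw [hfz]
      nlinarith [mul_nonneg (mul_nonneg (mul_nonneg hK.le hθ'.le) hψz) (sq_nonneg (u z - u y'))]
  have hGmono : MonotoneOn G (Icc a b) := by
    refine monotoneOn_of_deriv_nonneg (convex_Icc a b) (hGcont.mono habI) ?_ ?_
    · rw [interior_Icc]
      exact fun z hz => (hGderiv z hz).differentiableAt.differentiableWithinAt
    · rw [interior_Icc]
      intro z hz
      rw [(hGderiv z hz).deriv]
      exact hGnn z hz
  have hGzero : ∀ x ∈ Icc a b, G x = 0 := by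
    intro x hx
    have haab : a ∈ Icc a b := ⟨le_rfl, hab.le⟩
    have hbab : b ∈ Icc a b := ⟨hab.le, le_rfl⟩
    have h1 := hGmono haab hx hx.1
    have h2 := hGmono hx hbab hx.2
    linarith
  have hy₀ab : y₀ ∈ Ioo a b := ⟨hay₀, hy₀b⟩
  have h0 : HasDerivAt G 0 y₀ := by
    refine (hasDerivAt_const y₀ (0:ℝ)).congr_of_eventuallyEq ?_
    filter_upwards [Ioo_mem_nhds hay₀ hy₀b] with z hz
    exact hGzero z (Ioo_subset_Icc_self hz)
  have huniq := (hGderiv y₀ hy₀ab).unique h0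
  have hfz := hfψ y₀ hy₀ hy₀ne
  have hθ' : 0 < (θ y₀)⁻¹ := inv_pos.mpr (hθpos y₀ hy₀)
  have hund := hune y₀ hy₀ hy₀ne
  rw [hfz] at huniq
  have hsq : 0 < (u y₀ - u y') ^ 2 := by
    have hne2 : (u y₀ - u y') ^ 2 ≠ 0 := pow_ne_zero 2 hund
    exact (sq_nonneg _).lt_of_ne (Ne.symm hne2)
  nlinarith [mul_pos (mul_pos (mul_pos hK hθ') hψy₀) hsq, huniq]

private lemma zero_lemma
    (u θ : ℝ → ℝ) (c0 : ℝ) (hc0 : 0 < c0)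
    (hu : ContDiff ℝ (⊤ : ℕ∞) u)
    (hu' : ∀ y ∈ Icc (0:ℝ) 1, c0 ≤ deriv u y)
    (hθc : ∀ y ∈ Icc (0:ℝ) 1, c0 ≤ θ y)
    (y' : ℝ) (hy' : y' ∈ Icc (0:ℝ) 1)
    (K : ℝ) (hK : 0 < K) (f Fd : ℝ → ℝ)
    (hf : ∀ y ∈ Icc (0:ℝ) 1, HasDerivWithinAt f (Fd y) (Icc (0:ℝ) 1) y)
    (hG : ∀ y ∈ Icc (0:ℝ) 1, HasDerivWithinAt
      (fun z => (u z - u y') * (θ z)⁻¹ * Fd z - (deriv u z / θ z) * f z)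
      (K * (θ y)⁻¹ * (u y - u y') * f y) (Icc (0:ℝ) 1) y)
    (hf0 : f 0 = 0) (hf1 : f 1 = 0) (hfy : f y' = 0) :
    ∀ y ∈ Icc (0:ℝ) 1, f y = 0 := by
  intro y hy
  by_contra hne
  have husm : StrictMonoOn u (Icc (0:ℝ) 1) :=
    strictMonoOn_of_deriv_pos (convex_Icc 0 1) hu.continuous.continuousOn
      (fun x hx => lt_of_lt_of_le hc0 (hu' x (interior_subset hx)))
  have hyne : y ≠ y' := fun h => hne (by rw [h]; exact hfy)
  have hd : u y - u y' ≠ 0 := sub_ne_zero.mpr (fun h => hyne (husm.injOn hy hy' h))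
  rcases (div_ne_zero hne hd).lt_or_gt with h | h
  · have hf' : ∀ t ∈ Icc (0:ℝ) 1, HasDerivWithinAt (fun z => -f z) (-Fd t) (Icc (0:ℝ) 1) t :=
      fun t ht => (hf t ht).neg
    have hG' : ∀ t ∈ Icc (0:ℝ) 1, HasDerivWithinAt
        (fun z => (u z - u y') * (θ z)⁻¹ * (-Fd z) - (deriv u z / θ z) * (-f z))
        (K * (θ t)⁻¹ * (u t - u y') * (-f t)) (Icc (0:ℝ) 1) t := by
      intro t ht
      have h3 := (hG t ht).neg
      have h4 : K * (θ t)⁻¹ * (u t - u y') * (-f t)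
          = -(K * (θ t)⁻¹ * (u t - u y') * f t) := by ring
      rw [h4]
      exact h3.congr (fun z _ => by simp only [Pi.neg_apply]; ring) (by simp only [Pi.neg_apply]; ring)
    exact no_pos u θ c0 hc0 hu hu' hθc y' hy' K hK (fun z => -f z) (fun z => -Fd z)
      hf' hG' (by simp [hf0]) (by simp [hf1]) (by simp [hfy]) y hy
      (by rw [neg_div]; linarith)
  · exact no_pos u θ c0 hc0 hu hu' hθc y' hy' K hK f Fd hf hG hf0 hf1 hfy y hy h

/-- if `u(y')` is an embedded eigenvalue (there is a nontrivial Dirichlet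
eigenfunction), then `(u'/θ)'(y') = 0`. -/
theorem stmt5
    (u θ : ℝ → ℝ) (c0 : ℝ) (hc0 : 0 < c0)
    (hu : ContDiff ℝ (⊤ : ℕ∞) u) (hθ : ContDiff ℝ (⊤ : ℕ∞) θ)
    (hu' : ∀ y ∈ Icc (0:ℝ) 1, c0 ≤ deriv u y)
    (hθc : ∀ y ∈ Icc (0:ℝ) 1, c0 ≤ θ y)
    (k : ℤ) (hk : k ≠ 0) (y' : ℝ) (hy' : y' ∈ Icc (0:ℝ) 1)
    (Φ : ℝ → ℂ)
    (hΦreg : ContDiffOn ℝ 2 Φ (Icc (0:ℝ) 1))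
    (hΦne : ∃ y ∈ Icc (0:ℝ) 1, Φ y ≠ 0)
    (hΦ0 : Φ 0 = 0) (hΦ1 : Φ 1 = 0)
    (hΦeq : ∀ y ∈ Icc (0:ℝ) 1,
      ((u y - u y' : ℝ) : ℂ) *
          (derivWithin (fun z => (((θ z : ℝ) : ℂ))⁻¹ * derivWithin Φ (Icc (0:ℝ) 1) z)
              (Icc (0:ℝ) 1) y
            - (k:ℂ)^2 * (((θ y : ℝ) : ℂ))⁻¹ * Φ y)
        = ((deriv (fun z => deriv u z / θ z) y : ℝ) : ℂ) * Φ y) :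
    deriv (fun z => deriv u z / θ z) y' = 0 := by
  by_contra hw
  have hI : UniqueDiffOn ℝ (Icc (0:ℝ) 1) := uniqueDiffOn_Icc one_pos
  have hΦdiff : DifferentiableOn ℝ Φ (Icc (0:ℝ) 1) := hΦreg.differentiableOn (by norm_num)
  have hΦ' : ∀ y ∈ Icc (0:ℝ) 1,
      HasDerivWithinAt Φ (derivWithin Φ (Icc (0:ℝ) 1) y) (Icc (0:ℝ) 1) y :=
    fun y hy => (hΦdiff y hy).hasDerivWithinAt
  have hFC1 : ContDiffOn ℝ 1 (derivWithin Φ (Icc (0:ℝ) 1)) (Icc (0:ℝ) 1) :=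
    hΦreg.derivWithin hI (by norm_num)
  have hFdiff : DifferentiableOn ℝ (derivWithin Φ (Icc (0:ℝ) 1)) (Icc (0:ℝ) 1) :=
    hFC1.differentiableOn one_ne_zero
  have hθpos : ∀ y ∈ Icc (0:ℝ) 1, 0 < θ y := fun y hy => lt_of_lt_of_le hc0 (hθc y hy)
  have hPdiff : DifferentiableOn ℝ
      (fun z => (((θ z : ℝ) : ℂ))⁻¹ * derivWithin Φ (Icc (0:ℝ) 1) z) (Icc (0:ℝ) 1) := by
    intro y hy
    refine DifferentiableWithinAt.mul ?_ (hFdiff y hy)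
    refine DifferentiableWithinAt.inv ?_ ?_
    · exact (Complex.ofRealCLM.differentiable.comp
        (hθ.differentiable (by simp))).differentiableAt.differentiableWithinAt
    · exact_mod_cast (hθpos y hy).ne'
  have hudC : ContDiff ℝ (⊤:ℕ∞) (deriv u) := (contDiff_infty_iff_deriv.mp hu).2
  have hqd : ∀ y ∈ Icc (0:ℝ) 1,
      HasDerivAt (fun z => deriv u z / θ z) (deriv (fun z => deriv u z / θ z) y) y := by
    intro y hy
    refine DifferentiableAt.hasDerivAt ?_
    exact ((hudC.differentiable (by simp)) y).div
      ((hθ.differentiable (by simp)) y) (hθpos y hy).ne'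
  have hw' : ((deriv (fun z => deriv u z / θ z) y' : ℝ) : ℂ) ≠ 0 := by exact_mod_cast hw
  have hΦy' : Φ y' = 0 := by
    have h := hΦeq y' hy'
    simp only [sub_self, Complex.ofReal_zero, zero_mul] at h
    rcases mul_eq_zero.mp h.symm with h2 | h2
    · exact absurd h2 hw'
    · exact h2
  -- key complex derivative of G
  have key : ∀ y ∈ Icc (0:ℝ) 1, HasDerivWithinAt
      (fun z => ((u z - u y' : ℝ) : ℂ) * (((θ z : ℝ) : ℂ))⁻¹ * derivWithin Φ (Icc (0:ℝ) 1) z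
        - ((deriv u z / θ z : ℝ) : ℂ) * Φ z)
      (((((k:ℝ)^2 * (θ y)⁻¹ * (u y - u y')) : ℝ) : ℂ) * Φ y) (Icc (0:ℝ) 1) y := by
    intro y hy
    have h1 : HasDerivWithinAt (fun z => ((u z - u y' : ℝ) : ℂ)) ((deriv u y : ℝ) : ℂ)
        (Icc (0:ℝ) 1) y :=
      ((((hu.differentiable (by simp)) y).hasDerivAt.sub_const
        (u y')).ofReal_comp).hasDerivWithinAt
    have h2 : HasDerivWithinAt (fun z => (((θ z : ℝ) : ℂ))⁻¹ * derivWithin Φ (Icc (0:ℝ) 1) z)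
        (derivWithin (fun z => (((θ z : ℝ) : ℂ))⁻¹ * derivWithin Φ (Icc (0:ℝ) 1) z)
          (Icc (0:ℝ) 1) y) (Icc (0:ℝ) 1) y := (hPdiff y hy).hasDerivWithinAt
    have h3 : HasDerivWithinAt (fun z => ((deriv u z / θ z : ℝ) : ℂ))
        ((deriv (fun z => deriv u z / θ z) y : ℝ) : ℂ) (Icc (0:ℝ) 1) y :=
      ((hqd y hy).ofReal_comp).hasDerivWithinAt
    have h4 := hΦ' y hy
    have h5 := (h1.mul h2).sub (h3.mul h4)
    have h6 := h5.congr (f₁ := fun z => ((u z - u y' : ℝ) : ℂ) * (((θ z : ℝ) : ℂ))⁻¹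
        * derivWithin Φ (Icc (0:ℝ) 1) z - ((deriv u z / θ z : ℝ) : ℂ) * Φ z)
      (fun z _ => by simp only [Pi.sub_apply, Pi.mul_apply]; ring)
      (by simp only [Pi.sub_apply, Pi.mul_apply]; ring)
    convert h6 using 1
    · rfl
    have heq := hΦeq y hy
    push_cast at heq ⊢
    linear_combination -heq
  -- real and imaginary parts vanish
  have main : ∀ (L : ℂ →L[ℝ] ℝ), ∀ y ∈ Icc (0:ℝ) 1, L (Φ y) = 0 := by
    intro L
    have hLs : ∀ (r : ℝ) (w : ℂ), L ((r:ℂ) * w) = r * L w := by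
      intro r w; rw [← Complex.real_smul, L.map_smul, smul_eq_mul]
    have hKpos : (0:ℝ) < (k:ℝ)^2 := by
      have hk' : ((k:ℝ)) ≠ 0 := Int.cast_ne_zero.mpr hk
      positivity
    refine zero_lemma u θ c0 hc0 hu hu' hθc y' hy' ((k:ℝ)^2) hKpos
      (fun z => L (Φ z)) (fun z => L (derivWithin Φ (Icc (0:ℝ) 1) z)) ?_ ?_
      (by simp [hΦ0]) (by simp [hΦ1]) (by simp [hΦy'])
    · exact fun y hy => L.hasFDerivAt.comp_hasDerivWithinAt y (hΦ' y hy)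
    · intro y hy
      have h7 := L.hasFDerivAt.comp_hasDerivWithinAt y (key y hy)
      have hval : L ((((((k:ℝ)^2 * (θ y)⁻¹ * (u y - u y')) : ℝ) : ℂ)) * Φ y)
          = (k:ℝ)^2 * (θ y)⁻¹ * (u y - u y') * (L (Φ y)) := by rw [hLs]
      rw [hval] at h7
      refine h7.congr (fun z _ => ?_) ?_
      · show (u z - u y') * (θ z)⁻¹ * L (derivWithin Φ (Icc (0:ℝ) 1) z)
          - deriv u z / θ z * L (Φ z) = _
        simp only [Function.comp_apply, map_sub]
        rw [show ((u z - u y' : ℝ) : ℂ) * (((θ z : ℝ) : ℂ))⁻¹ * derivWithin Φ (Icc (0:ℝ) 1) z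
            = ((((u z - u y') * (θ z)⁻¹ : ℝ)) : ℂ) * derivWithin Φ (Icc (0:ℝ) 1) z by
          push_cast; ring]
        rw [hLs, hLs]
      · show (u y - u y') * (θ y)⁻¹ * L (derivWithin Φ (Icc (0:ℝ) 1) y)
          - deriv u y / θ y * L (Φ y) = _
        simp only [Function.comp_apply, map_sub]
        rw [show ((u y - u y' : ℝ) : ℂ) * (((θ y : ℝ) : ℂ))⁻¹ * derivWithin Φ (Icc (0:ℝ) 1) y
            = ((((u y - u y') * (θ y)⁻¹ : ℝ)) : ℂ) * derivWithin Φ (Icc (0:ℝ) 1) y by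
          push_cast; ring]
        rw [hLs, hLs]
  obtain ⟨y₂, hy₂, hΦy₂⟩ := hΦne
  apply hΦy₂
  have hre := main Complex.reCLM y₂ hy₂
  have him := main Complex.imCLM y₂ hy₂
  exact Complex.ext (by simpa using hre) (by simpa using him)
end

section
/- Let k be a nonzero integer and c ∈ ℂ with Im c ≠ 0. Suppose the function (u'/θ)' does not change sign on [0,1] (i.e. (u'/θ)'(y) ≥ 0 for all y, or (u'/θ)'(y) ≤ 0 for all y). If Φ : [0,1] → ℂ is a C² function with Φ(0) = Φ(1) = 0 satisfying (u(y) − c) [ ∂_y( θ(y)^{-1} ∂_y Φ(y) ) − k² θ(y)^{-1} Φ(y) ] = (u'/θ)'(y) Φ(y) on [0,1], then Φ is identically zero. -/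
open Set MeasureTheory

lemma im_re_aux (r s : ℝ) (z : ℂ) :
    ((r:ℂ) + (s:ℂ) * z).im = s * z.im ∧ ((r:ℂ) + (s:ℂ) * z).re = r + s * z.re := by
  constructor <;> simp

lemma aux_zero {f : ℝ → ℝ} (hf : ContinuousOn f (Icc 0 1))
    (h0 : ∀ y ∈ Icc (0:ℝ) 1, 0 ≤ f y)
    (hint : ∫ y in (0:ℝ)..1, f y = 0) : ∀ y ∈ Icc (0:ℝ) 1, f y = 0 := by
  have hi : IntervalIntegrable f volume 0 1 :=
    (hf.mono (by rw [uIcc_of_le (by norm_num : (0:ℝ) ≤ 1)])).intervalIntegrable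
  have hae : f =ᵐ[volume.restrict (Ioc (0:ℝ) 1)] 0 := by
    rw [← intervalIntegral.integral_eq_zero_iff_of_le_of_nonneg_ae (by norm_num : (0:ℝ) ≤ 1) ?_ hi]
    · exact hint
    · filter_upwards [ae_restrict_mem measurableSet_Ioc] with y hy
      exact h0 y (Ioc_subset_Icc_self hy)
  have hae' : f =ᵐ[volume.restrict (Icc (0:ℝ) 1)] 0 := by
    rwa [Measure.restrict_congr_set Ioc_ae_eq_Icc] at hae
  exact Measure.eqOn_Icc_of_ae_eq volume (by norm_num : (0:ℝ) ≠ 1) hae' hf continuousOn_const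

/-- if `Im c ≠ 0` and `(u'/θ)'` does not change sign on `[0,1]`,
then the only Dirichlet solution of the distorted Rayleigh equation is the zero function. -/
theorem stmt6
    (u θ : ℝ → ℝ) (c0 : ℝ) (hc0 : 0 < c0)
    (hu : ContDiff ℝ (⊤ : ℕ∞) u) (hθ : ContDiff ℝ (⊤ : ℕ∞) θ)
    (hu' : ∀ y ∈ Icc (0:ℝ) 1, c0 ≤ deriv u y)
    (hθc : ∀ y ∈ Icc (0:ℝ) 1, c0 ≤ θ y)
    (k : ℤ) (hk : k ≠ 0) (c : ℂ) (hc : c.im ≠ 0)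
    (hsign : (∀ y ∈ Icc (0:ℝ) 1, 0 ≤ deriv (fun z => deriv u z / θ z) y) ∨
             (∀ y ∈ Icc (0:ℝ) 1, deriv (fun z => deriv u z / θ z) y ≤ 0))
    (Φ : ℝ → ℂ)
    (hΦreg : ContDiffOn ℝ 2 Φ (Icc (0:ℝ) 1))
    (hΦ0 : Φ 0 = 0) (hΦ1 : Φ 1 = 0)
    (hΦeq : ∀ y ∈ Icc (0:ℝ) 1,
      (((u y : ℝ) : ℂ) - c) *
          (derivWithin (fun z => (((θ z : ℝ) : ℂ))⁻¹ * derivWithin Φ (Icc (0:ℝ) 1) z)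
              (Icc (0:ℝ) 1) y
            - (k:ℂ)^2 * (((θ y : ℝ) : ℂ))⁻¹ * Φ y)
        = ((deriv (fun z => deriv u z / θ z) y : ℝ) : ℂ) * Φ y) :
    ∀ y ∈ Icc (0:ℝ) 1, Φ y = 0 := by
  set I : Set ℝ := Icc (0:ℝ) 1 with hIdef
  have h01 : (0:ℝ) ≤ 1 := by norm_num
  have hUD : UniqueDiffOn ℝ I := uniqueDiffOn_Icc one_pos
  have huIcc : uIcc (0:ℝ) 1 = I := uIcc_of_le h01
  have hθpos : ∀ y ∈ I, 0 < θ y := fun y hy => lt_of_lt_of_le hc0 (hθc y hy)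
  -- shorthand notation
  set d : ℝ → ℝ := fun z => deriv (fun z => deriv u z / θ z) z with hd_def
  set ψ : ℝ → ℂ := fun z => derivWithin Φ I z with hψ_def
  set θC : ℝ → ℂ := fun z => ((θ z : ℝ) : ℂ) with hθC_def
  set uc : ℝ → ℂ := fun y => ((u y : ℝ) : ℂ) - c with huc_def
  have huc0 : ∀ y, uc y ≠ 0 := by
    intro y h
    apply hc
    have := congrArg Complex.im h
    simpa [huc_def] using this.symm
  set A : ℝ → ℂ := fun z => (θC z)⁻¹ * ψ z with hA_def
  -- regularity
  have hψC1 : ContDiffOn ℝ 1 ψ I := hΦreg.derivWithin hUD (by norm_num)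
  have hθC1 : ContDiffOn ℝ 1 θC I :=
    (Complex.ofRealCLM.contDiff.comp hθ).contDiffOn.of_le (by exact_mod_cast le_top)
  have hθC0 : ∀ y ∈ I, θC y ≠ 0 := fun y hy => by
    simp only [hθC_def, ne_eq, Complex.ofReal_eq_zero]
    exact ne_of_gt (hθpos y hy)
  have hAC1 : ContDiffOn ℝ 1 A I := (hθC1.inv hθC0).mul hψC1
  set A' : ℝ → ℂ := fun y => derivWithin A I y with hA'_def
  have hA'd : ∀ y ∈ I, HasDerivWithinAt A (A' y) I y := fun y hy =>
    ((hAC1.differentiableOn one_ne_zero) y hy).hasDerivWithinAt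
  have hΦd : ∀ y ∈ I, HasDerivWithinAt Φ (ψ y) I y := fun y hy =>
    ((hΦreg.differentiableOn two_ne_zero) y hy).hasDerivWithinAt
  -- the equation, solved for A'
  have hAeq : ∀ y ∈ I, A' y = (k:ℂ)^2 * (θC y)⁻¹ * Φ y + (d y : ℂ) * (uc y)⁻¹ * Φ y := by
    intro y hy
    have h := hΦeq y hy
    have huy := huc0 y
    field_simp [huc_def, hθC_def, hA'_def, hA_def, hψ_def, hd_def] at h ⊢
    linear_combination h
  -- the integrand
  set G : ℝ → ℂ := fun y => A' y * star (Φ y) + A y * star (ψ y) with hG_def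
  have hF' : ∀ y ∈ I, HasDerivWithinAt (fun z => A z * star (Φ z)) (G y) I y := by
    intro y hy
    exact (hA'd y hy).mul ((hΦd y hy).star)
  have hGcont : ContinuousOn G I := by
    apply ContinuousOn.add
    · exact (hAC1.continuousOn_derivWithin hUD le_rfl).mul hΦreg.continuousOn.star
    · exact hAC1.continuousOn.mul hψC1.continuousOn.star
  have hGint : IntervalIntegrable G volume 0 1 :=
    (hGcont.mono huIcc.le).intervalIntegrable
  -- FTC
  have hint0 : ∫ y in (0:ℝ)..1, G y = 0 := by
    have := intervalIntegral.integral_eq_sub_of_hasDeriv_right_of_le h01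
      (f := fun z => A z * star (Φ z)) (f' := G)
      (hAC1.continuousOn.mul hΦreg.continuousOn.star)
      (fun x hx => ((hF' x (Ioo_subset_Icc_self hx)).hasDerivAt
        (Icc_mem_nhds hx.1 hx.2)).hasDerivWithinAt)
      hGint
    rw [this]
    rw [hΦ0, hΦ1]
    simp
  -- real quantities
  set nΦ : ℝ → ℝ := fun y => Complex.normSq (Φ y) with hnΦ_def
  set nψ : ℝ → ℝ := fun y => Complex.normSq (ψ y) with hnψ_def
  set m : ℝ → ℝ := fun y => Complex.normSq (uc y) with hm_def
  have hmpos : ∀ y, 0 < m y := fun y => Complex.normSq_pos.mpr (huc0 y)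
  -- the key pointwise form of G
  have hGform : ∀ y ∈ I, G y =
      (((θ y)⁻¹ * (nψ y + (k:ℝ)^2 * nΦ y) : ℝ) : ℂ) + ((d y * nΦ y : ℝ) : ℂ) * (uc y)⁻¹ := by
    intro y hy
    rw [hG_def]
    simp only [hAeq y hy, hA_def]
    have h1 : Φ y * star (Φ y) = ((nΦ y : ℝ) : ℂ) := Complex.mul_conj _
    have h2 : ψ y * star (ψ y) = ((nψ y : ℝ) : ℂ) := Complex.mul_conj _
    push_cast
    rw [hθC_def]
    push_cast
    linear_combination ((k:ℂ)^2 * ((θ y:ℂ))⁻¹ + (d y:ℂ) * (uc y)⁻¹) * h1 + ((θ y:ℂ))⁻¹ * h2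
  -- imaginary part
  set q : ℝ → ℝ := fun y => d y * nΦ y / m y with hq_def
  have hucim : ∀ y, ((uc y)⁻¹).im = c.im / m y := by
    intro y
    rw [Complex.inv_im]
    simp [huc_def, hm_def, neg_div]
  have hGim : ∀ y ∈ I, (G y).im = c.im * q y := by
    intro y hy
    rw [hGform y hy, (im_re_aux _ _ _).1, hucim y, hq_def]
    field_simp
  have hGre : ∀ y ∈ I, (G y).re =
      (θ y)⁻¹ * (nψ y + (k:ℝ)^2 * nΦ y) + (d y * nΦ y) * ((uc y)⁻¹).re := by
    intro y hy
    rw [hGform y hy, (im_re_aux _ _ _).2]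
  -- integral of the imaginary part vanishes
  have hIm0 : ∫ y in (0:ℝ)..1, (G y).im = 0 := by
    rw [intervalIntegral.integral_of_le h01] at hint0 ⊢
    have : ∫ y in Ioc (0:ℝ) 1, (G y).im = (∫ y in Ioc (0:ℝ) 1, G y).im := by
      simpa using integral_im (μ := volume.restrict (Ioc (0:ℝ) 1))
        (f := G) ((hGint.1).mono_set (by simp))
    rw [this, hint0]
    simp
  have hRe0 : ∫ y in (0:ℝ)..1, (G y).re = 0 := by
    rw [intervalIntegral.integral_of_le h01] at hint0 ⊢
    have : ∫ y in Ioc (0:ℝ) 1, (G y).re = (∫ y in Ioc (0:ℝ) 1, G y).re := by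
      simpa using integral_re (μ := volume.restrict (Ioc (0:ℝ) 1))
        (f := G) ((hGint.1).mono_set (by simp))
    rw [this, hint0]
    simp
  -- continuity of real quantities
  have hΦcont : ContinuousOn Φ I := hΦreg.continuousOn
  have hnΦcont : ContinuousOn nΦ I := Complex.continuous_normSq.comp_continuousOn hΦcont
  have hnψcont : ContinuousOn nψ I := Complex.continuous_normSq.comp_continuousOn hψC1.continuousOn
  have hmcont : ContinuousOn m I := Complex.continuous_normSq.comp_continuousOn
    (((Complex.continuous_ofReal.comp hu.continuous).sub continuous_const).continuousOn)
  have hdcont : ContinuousOn d I := by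
    have hUopen : IsOpen (θ ⁻¹' (Ioi 0)) := isOpen_Ioi.preimage hθ.continuous
    have hIU : I ⊆ θ ⁻¹' (Ioi 0) := fun y hy => hθpos y hy
    have hw : ContDiffOn ℝ (((⊤:ℕ∞)):WithTop ℕ∞) (fun z => deriv u z / θ z) (θ ⁻¹' (Ioi 0)) :=
      ((contDiff_infty_iff_deriv.mp hu).2.contDiffOn).div hθ.contDiffOn
        (fun y hy => ne_of_gt hy)
    exact (hw.continuousOn_deriv_of_isOpen hUopen (by exact_mod_cast le_top)).mono hIU
  have hqcont : ContinuousOn q I :=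
    ((hdcont.mul hnΦcont).div hmcont (fun y _ => ne_of_gt (hmpos y)))
  -- the sign argument: d * nΦ = 0 on I
  have hdnΦ : ∀ y ∈ I, d y * nΦ y = 0 := by
    have hq0 : ∀ y ∈ I, q y = 0 := by
      have hqint0 : ∫ y in (0:ℝ)..1, q y = 0 := by
        have hcongr : ∫ y in (0:ℝ)..1, (G y).im = ∫ y in (0:ℝ)..1, c.im * q y :=
          intervalIntegral.integral_congr (fun y hy => hGim y (huIcc ▸ hy))
        rw [hcongr, intervalIntegral.integral_const_mul] at hIm0
        exact (mul_eq_zero.mp hIm0).resolve_left hc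
      rcases hsign with hs | hs
      · exact aux_zero hqcont
          (fun y hy => div_nonneg (mul_nonneg (hs y hy) (Complex.normSq_nonneg _))
            (hmpos y).le) hqint0
      · intro y hy
        have := aux_zero (f := fun y => -q y) hqcont.neg
          (fun y hy => by
            simp only [neg_nonneg]
            exact div_nonpos_of_nonpos_of_nonneg
              (mul_nonpos_of_nonpos_of_nonneg (hs y hy) (Complex.normSq_nonneg _))
              (hmpos y).le)
          (by rw [intervalIntegral.integral_neg, hqint0, neg_zero]) y hy
        simp only [neg_eq_zero] at this
        exact this
    intro y hy
    have := hq0 y hy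
    simp only [hq_def] at this
    have := div_eq_zero_iff.mp this
    rcases this with h | h
    · exact h
    · exact absurd h (ne_of_gt (hmpos y))
  -- the real part: energy identity
  set f : ℝ → ℝ := fun y => (θ y)⁻¹ * (nψ y + (k:ℝ)^2 * nΦ y) with hf_def
  have hfcont : ContinuousOn f I :=
    ((hθ.continuous.continuousOn.inv₀ (fun y hy => ne_of_gt (hθpos y hy))).mul
      (hnψcont.add (continuousOn_const.mul hnΦcont)))
  have hfnonneg : ∀ y ∈ I, 0 ≤ f y := by
    intro y hy
    exact mul_nonneg (inv_nonneg.mpr (hθpos y hy).le)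
      (add_nonneg (Complex.normSq_nonneg _)
        (mul_nonneg (sq_nonneg _) (Complex.normSq_nonneg _)))
  have hfint0 : ∫ y in (0:ℝ)..1, f y = 0 := by
    have hcongr : ∫ y in (0:ℝ)..1, (G y).re = ∫ y in (0:ℝ)..1, f y := by
      apply intervalIntegral.integral_congr
      intro y hy
      show (G y).re = f y
      rw [hGre y (huIcc ▸ hy), hdnΦ y (huIcc ▸ hy)]
      ring
    rw [← hcongr]; exact hRe0
  have hf0 := aux_zero hfcont hfnonneg hfint0
  -- conclude
  intro y hy
  have := hf0 y hy
  simp only [hf_def] at this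
  have hθinv : (θ y)⁻¹ ≠ 0 := inv_ne_zero (ne_of_gt (hθpos y hy))
  have hsum : nψ y + (k:ℝ)^2 * nΦ y = 0 := by
    rcases mul_eq_zero.mp this with h | h
    · exact absurd h hθinv
    · exact h
  have hkR : (k:ℝ) ≠ 0 := Int.cast_ne_zero.mpr hk
  have hk2 : (0:ℝ) < (k:ℝ)^2 := by positivity
  have hnΦ0 : nΦ y = 0 := by
    nlinarith [Complex.normSq_nonneg (ψ y), Complex.normSq_nonneg (Φ y)]
  exact Complex.normSq_eq_zero.mp hnΦ0
end

section
/- Let k be a nonzero integer. There exists a unique C² function 𝔮_α : [α,β] → ℝ with 𝔮_α(α) = 1 and 𝔮_α'(α) = 0 solving (h1 𝔮_α')' = k² h2 𝔮_α on [α,β]; it satisfies 𝔮_α(v) ≥ 1 and 𝔮_α'(v) ≥ 0 for all v ∈ [α,β], and the integral equation 𝔮_α(v) = 1 + k² ∫_α^v h1(v')^{-1} ∫_α^{v'} h2(v'') 𝔮_α(v'') dv'' dv'. Likewise there exists a unique C² solution 𝔮_β with 𝔮_β(β) = 1 and 𝔮_β'(β) = 0, satisfying 𝔮_β ≥ 1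 and 𝔮_β' ≤ 0 on [α,β]. Moreover, the Wronskian satisfies h1(v) ( 𝔮_α(v) 𝔮_β'(v) − 𝔮_α'(v) 𝔮_β(v) ) = h1(α) 𝔮_β'(α) = − h1(β) 𝔮_α'(β) < 0 for all v ∈ [α,β]. -/
open Set MeasureTheory intervalIntegral Function

/-- existence, uniqueness, monotonicity, integral equation, and Wronskian
identity for the Sturm-Liouville solutions. -/
lemma abs_int_pow (t₀ v : ℝ) (n : ℕ) :
    |∫ s in t₀..v, |s - t₀| ^ n| = |v - t₀| ^ (n + 1) / (n + 1) := by
  rcases le_total t₀ v with h | h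
  · have h1 : (∫ s in t₀..v, |s - t₀| ^ n) = ∫ s in t₀..v, (s - t₀) ^ n := by
      apply intervalIntegral.integral_congr
      intro s hs
      rw [uIcc_of_le h] at hs
      show |s - t₀| ^ n = (s - t₀) ^ n
      rw [abs_of_nonneg (by linarith [hs.1])]
    rw [h1, intervalIntegral.integral_comp_sub_right (fun x => x ^ n) t₀, sub_self,
      integral_pow, zero_pow (Nat.succ_ne_zero n), sub_zero, abs_div,
      abs_of_nonneg (pow_nonneg (by linarith : (0:ℝ) ≤ v - t₀) _),
      abs_of_nonneg (by positivity : (0:ℝ) ≤ (n:ℝ) + 1),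
      abs_of_nonneg (by linarith : (0:ℝ) ≤ v - t₀)]
  · have h1 : (∫ s in t₀..v, |s - t₀| ^ n) = ∫ s in t₀..v, (t₀ - s) ^ n := by
      apply intervalIntegral.integral_congr
      intro s hs
      rw [uIcc_of_ge h] at hs
      show |s - t₀| ^ n = (t₀ - s) ^ n
      rw [abs_of_nonpos (by linarith [hs.2]), neg_sub]
    rw [h1, intervalIntegral.integral_comp_sub_left (fun x => x ^ n) t₀, sub_self,
      integral_pow, zero_pow (Nat.succ_ne_zero n), zero_sub, abs_div, abs_neg,
      abs_of_nonneg (pow_nonneg (by linarith : (0:ℝ) ≤ t₀ - v) _),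
      abs_of_nonneg (by positivity : (0:ℝ) ≤ (n:ℝ) + 1)]
    rw [show |v - t₀| = t₀ - v by rw [abs_of_nonpos (by linarith)]; ring]

lemma gronwall_zero_right {E : Type*} [NormedAddCommGroup E] [NormedSpace ℝ E]
    {g g' : ℝ → E} {a b L : ℝ}
    (hg : ContinuousOn g (Icc a b))
    (hd : ∀ x ∈ Ico a b, HasDerivWithinAt g (g' x) (Ici x) x)
    (ha : g a = 0) (bound : ∀ x ∈ Ico a b, ‖g' x‖ ≤ L * ‖g x‖) :
    ∀ x ∈ Icc a b, g x = 0 := by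
  intro x hx
  have := norm_le_gronwallBound_of_norm_deriv_right_le (δ := 0) (K := L) (ε := 0) hg hd
    (by simp [ha]) (fun y hy => by simpa using bound y hy) x hx
  rw [gronwallBound_ε0_δ0] at this
  simpa using le_antisymm this (norm_nonneg _)

lemma gronwall_zero_left {E : Type*} [NormedAddCommGroup E] [NormedSpace ℝ E]
    {g g' : ℝ → E} {a b L : ℝ}
    (hg : ContinuousOn g (Icc a b))
    (hd : ∀ x ∈ Ioc a b, HasDerivWithinAt g (g' x) (Iic x) x)
    (hb : g b = 0) (bound : ∀ x ∈ Ioc a b, ‖g' x‖ ≤ L * ‖g x‖) :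
    ∀ x ∈ Icc a b, g x = 0 := by
  have hr : ∀ x ∈ Icc a b, a + b - x ∈ Icc a b := by
    intro x hx; constructor <;> [linarith [hx.2]; linarith [hx.1]]
  have key : ∀ x ∈ Icc a b, g (a + b - x) = 0 := by
    apply gronwall_zero_right (g' := fun x => (-1 : ℝ) • g' (a + b - x)) (L := L)
    · exact hg.comp (by fun_prop) hr
    · intro x hx
      have h1 : a + b - x ∈ Ioc a b := ⟨by linarith [hx.2], by linarith [hx.1]⟩
      have h2 : HasDerivWithinAt (fun y : ℝ => a + b - y) (-1) (Ici x) x := by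
        simpa using ((hasDerivAt_id x).const_sub (a+b)).hasDerivWithinAt
      have h3 : MapsTo (fun y : ℝ => a + b - y) (Ici x) (Iic (a + b - x)) := by
        intro y hy; simp only [mem_Iic]; linarith [mem_Ici.mp hy]
      have := (hd _ h1).scomp x h2 h3
      exact this
    · simpa using hb
    · intro x hx
      have h1 : a + b - x ∈ Ioc a b := ⟨by linarith [hx.2], by linarith [hx.1]⟩
      simpa using bound _ h1
  intro x hx
  have := key (a + b - x) (hr x hx)
  simpa using this

lemma int_bound {α β t₀ v : ℝ} (ht₀ : t₀ ∈ Icc α β) (hv : v ∈ Icc α β)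
    {φ : ℝ → ℝ} (hφ : Continuous φ) {C : ℝ} (hC : 0 ≤ C) (n : ℕ)
    (hb : ∀ s ∈ Icc α β, |φ s| ≤ C * |s - t₀| ^ n) :
    |∫ s in t₀..v, φ s| ≤ C * (|v - t₀| ^ (n + 1) / (n + 1)) := by
  have hsub : Set.uIoc t₀ v ⊆ Icc α β := by
    refine subset_trans Ioc_subset_Icc_self ?_
    rcases le_total t₀ v with h | h
    · rw [min_eq_left h, max_eq_right h]; exact Icc_subset_Icc ht₀.1 hv.2
    · rw [min_eq_right h, max_eq_left h]; exact Icc_subset_Icc hv.1 ht₀.2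
  have habs : Continuous (fun s : ℝ => C * |s - t₀| ^ n) := by fun_prop
  have h2 : ‖∫ s in t₀..v, φ s‖ ≤ |∫ s in t₀..v, C * |s - t₀| ^ n| := by
    apply intervalIntegral.norm_integral_le_abs_of_norm_le
    · filter_upwards [ae_restrict_mem measurableSet_uIoc] with s hs
      exact hb s (hsub hs)
    · exact habs.intervalIntegrable _ _
  rw [intervalIntegral.integral_const_mul, abs_mul, abs_of_nonneg hC, abs_int_pow] at h2
  exact h2

lemma exists_QP (α β : ℝ) (hαβ : α < β) (c0 : ℝ) (hc0 : 0 < c0)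
    (h1 h2 : ℝ → ℝ) (hh1 : Continuous h1) (hh2 : Continuous h2)
    (hh1c : ∀ v ∈ Icc α β, c0 ≤ h1 v)
    (K : ℝ) (hK : 0 < K) (t₀ : ℝ) (ht₀ : t₀ ∈ Icc α β) :
    ∃ Q P : ℝ → ℝ, Continuous Q ∧ Continuous P ∧
      (∀ v, Q v = 1 + ∫ s in t₀..v,
        P (projIcc α β hαβ.le s : ℝ) / h1 (projIcc α β hαβ.le s : ℝ)) ∧
      (∀ v, P v = K * ∫ s in t₀..v,
        h2 (projIcc α β hαβ.le s : ℝ) * Q (projIcc α β hαβ.le s : ℝ)) := by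
  set hle := hαβ.le
  have hprc : Continuous (fun s : ℝ => (projIcc α β hle s : ℝ)) :=
    continuous_subtype_val.comp (continuous_projIcc)
  have hh1pos : ∀ s : ℝ, 0 < h1 (projIcc α β hle s : ℝ) := fun s =>
    lt_of_lt_of_le hc0 (hh1c _ (projIcc α β hle s).2)
  set F1 : ContinuousMap (Icc α β) (ℝ × ℝ) → ℝ → ℝ := fun f s =>
    (f (projIcc α β hle s)).2 / h1 (projIcc α β hle s : ℝ) with hF1
  set F2 : ContinuousMap (Icc α β) (ℝ × ℝ) → ℝ → ℝ := fun f s =>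
    h2 (projIcc α β hle s : ℝ) * (f (projIcc α β hle s)).1 with hF2
  have hF1c : ∀ f, Continuous (F1 f) := fun f =>
    ((continuous_snd.comp (f.continuous.comp continuous_projIcc))).div
      (hh1.comp hprc) (fun s => (hh1pos s).ne')
  have hF2c : ∀ f, Continuous (F2 f) := fun f =>
    (hh2.comp hprc).mul (continuous_fst.comp (f.continuous.comp continuous_projIcc))
  have hprim : ∀ (F : ℝ → ℝ), Continuous F →
      Continuous (fun v : ℝ => ∫ s in t₀..v, F s) := by
    intro F hF
    exact continuous_iff_continuousAt.2 fun v =>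
      ((hF.integral_hasStrictDerivAt t₀ v).hasDerivAt).continuousAt
  set T : ContinuousMap (Icc α β) (ℝ × ℝ) → ContinuousMap (Icc α β) (ℝ × ℝ) := fun f =>
    ⟨fun v => (1 + ∫ s in t₀..(v:ℝ), F1 f s, K * ∫ s in t₀..(v:ℝ), F2 f s), by
      apply Continuous.prodMk
      · exact (continuous_const.add ((hprim _ (hF1c f)).comp continuous_subtype_val))
      · exact (continuous_const.mul ((hprim _ (hF2c f)).comp continuous_subtype_val))⟩
    with hT
  obtain ⟨M₂, hM₂⟩ := isCompact_Icc.exists_bound_of_continuousOn hh2.continuousOn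
  have hM₂0 : 0 ≤ M₂ := le_trans (norm_nonneg _) (hM₂ α (left_mem_Icc.2 hle))
  set L : ℝ := max (1 / c0) (K * M₂) with hL
  have hL0 : 0 ≤ L := le_trans (by positivity) (le_max_left _ _)
  -- iterated distance bound
  have key : ∀ (n : ℕ) (f g : ContinuousMap (Icc α β) (ℝ × ℝ)) (v : Icc α β),
      dist ((T^[n]) f v) ((T^[n]) g v)
        ≤ L ^ n / n.factorial * dist f g * |(v : ℝ) - t₀| ^ n := by
    intro n
    induction n with
    | zero => intro f g v; simpa using ContinuousMap.dist_apply_le_dist v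
    | succ n ih =>
      intro f g v
      rw [Function.iterate_succ_apply', Function.iterate_succ_apply']
      set a := (T^[n]) f
      set b := (T^[n]) g
      set D := dist f g with hD
      have hD0 : 0 ≤ D := dist_nonneg
      set C₁ : ℝ := L ^ n / n.factorial * D with hC₁
      have hC₁0 : 0 ≤ C₁ := by positivity
      -- pointwise bounds for the differences of integrands
      have hb1 : ∀ s ∈ Icc α β, |F1 a s - F1 b s| ≤ (C₁ / c0) * |s - t₀| ^ n := by
        intro s hs
        have hps : (projIcc α β hle s : ℝ) = s := congrArg _ (projIcc_of_mem hle hs)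
        have hd := ih f g (projIcc α β hle s)
        rw [hps] at hd
        have hd2 : |(a (projIcc α β hle s)).2 - (b (projIcc α β hle s)).2|
            ≤ C₁ * |s - t₀| ^ n := by
          refine le_trans ?_ hd
          rw [← Real.dist_eq, Prod.dist_eq]
          exact le_max_right _ _
        have : F1 a s - F1 b s
            = ((a (projIcc α β hle s)).2 - (b (projIcc α β hle s)).2)
              / h1 (projIcc α β hle s : ℝ) := by
          simp only [hF1]; ring
        rw [this, abs_div, abs_of_pos (hh1pos s)]
        calc |(a (projIcc α β hle s)).2 - (b (projIcc α β hle s)).2| / h1 _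
            ≤ (C₁ * |s - t₀| ^ n) / c0 := by
              apply div_le_div₀ (by positivity) hd2 hc0
              exact hh1c _ (projIcc α β hle s).2
          _ = (C₁ / c0) * |s - t₀| ^ n := by ring
      have hb2 : ∀ s ∈ Icc α β, |F2 a s - F2 b s| ≤ (M₂ * C₁) * |s - t₀| ^ n := by
        intro s hs
        have hps : (projIcc α β hle s : ℝ) = s := congrArg _ (projIcc_of_mem hle hs)
        have hd := ih f g (projIcc α β hle s)
        rw [hps] at hd
        have hd1 : |(a (projIcc α β hle s)).1 - (b (projIcc α β hle s)).1|
            ≤ C₁ * |s - t₀| ^ n := by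
          refine le_trans ?_ hd
          rw [← Real.dist_eq, Prod.dist_eq]
          exact le_max_left _ _
        have : F2 a s - F2 b s
            = h2 (projIcc α β hle s : ℝ) *
              ((a (projIcc α β hle s)).1 - (b (projIcc α β hle s)).1) := by
          simp only [hF2]; ring
        rw [this, abs_mul]
        calc |h2 _| * |(a (projIcc α β hle s)).1 - (b (projIcc α β hle s)).1|
            ≤ M₂ * (C₁ * |s - t₀| ^ n) := by
              apply mul_le_mul (by simpa using hM₂ _ (projIcc α β hle s).2) hd1
                (abs_nonneg _) hM₂0
          _ = (M₂ * C₁) * |s - t₀| ^ n := by ring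
      -- now bound the distance of the images
      rw [Prod.dist_eq]
      have hint1 : (∫ s in t₀..(v:ℝ), F1 a s) - (∫ s in t₀..(v:ℝ), F1 b s)
          = ∫ s in t₀..(v:ℝ), (F1 a s - F1 b s) := by
        rw [intervalIntegral.integral_sub ((hF1c a).intervalIntegrable _ _)
          ((hF1c b).intervalIntegrable _ _)]
      have hint2 : (∫ s in t₀..(v:ℝ), F2 a s) - (∫ s in t₀..(v:ℝ), F2 b s)
          = ∫ s in t₀..(v:ℝ), (F2 a s - F2 b s) := by
        rw [intervalIntegral.integral_sub ((hF2c a).intervalIntegrable _ _)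
          ((hF2c b).intervalIntegrable _ _)]
      have e1 : dist (T a v).1 (T b v).1
          ≤ (C₁ / c0) * (|(v:ℝ) - t₀| ^ (n + 1) / (n + 1)) := by
        rw [Real.dist_eq]
        have : (T a v).1 - (T b v).1 = ∫ s in t₀..(v:ℝ), (F1 a s - F1 b s) := by
          simp only [hT, ContinuousMap.coe_mk]
          rw [← hint1]; ring
        rw [this]
        exact int_bound ht₀ v.2 ((hF1c a).sub (hF1c b)) (by positivity) n hb1
      have e2 : dist (T a v).2 (T b v).2
          ≤ K * ((M₂ * C₁) * (|(v:ℝ) - t₀| ^ (n + 1) / (n + 1))) := by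
        rw [Real.dist_eq]
        have : (T a v).2 - (T b v).2 = K * ∫ s in t₀..(v:ℝ), (F2 a s - F2 b s) := by
          simp only [hT, ContinuousMap.coe_mk]
          rw [← hint2]; ring
        rw [this, abs_mul, abs_of_pos hK]
        exact mul_le_mul_of_nonneg_left
          (int_bound ht₀ v.2 ((hF2c a).sub (hF2c b)) (by positivity) n hb2) hK.le
      have goal1 : (C₁ / c0) * (|(v:ℝ) - t₀| ^ (n + 1) / (n + 1))
          ≤ L ^ (n+1) / (n+1).factorial * D * |(v:ℝ) - t₀| ^ (n+1) := by
        have h1c : 1 / c0 ≤ L := le_max_left _ _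
        rw [Nat.factorial_succ]
        have : C₁ / c0 = (1 / c0) * (L ^ n / n.factorial * D) := by rw [hC₁]; ring
        rw [this]
        push_cast
        calc (1 / c0) * (L ^ n / n.factorial * D) * (|(v:ℝ) - t₀| ^ (n + 1) / (n + 1))
            ≤ L * (L ^ n / n.factorial * D) * (|(v:ℝ) - t₀| ^ (n + 1) / (n + 1)) := by
              apply mul_le_mul_of_nonneg_right (mul_le_mul_of_nonneg_right h1c (by positivity))
              positivity
          _ = L ^ (n+1) / ((n + 1 : ℝ) * n.factorial) * D * |(v:ℝ) - t₀| ^ (n+1) := by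
              field_simp; ring
      have goal2 : K * ((M₂ * C₁) * (|(v:ℝ) - t₀| ^ (n + 1) / (n + 1)))
          ≤ L ^ (n+1) / (n+1).factorial * D * |(v:ℝ) - t₀| ^ (n+1) := by
        have h2c : K * M₂ ≤ L := le_max_right _ _
        rw [Nat.factorial_succ]
        push_cast
        calc K * ((M₂ * C₁) * (|(v:ℝ) - t₀| ^ (n + 1) / (n + 1)))
            = (K * M₂) * (L ^ n / n.factorial * D) * (|(v:ℝ) - t₀| ^ (n + 1) / (n + 1)) := by
              rw [hC₁]; ring
          _ ≤ L * (L ^ n / n.factorial * D) * (|(v:ℝ) - t₀| ^ (n + 1) / (n + 1)) := by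
              apply mul_le_mul_of_nonneg_right (mul_le_mul_of_nonneg_right h2c (by positivity))
              positivity
          _ = L ^ (n+1) / ((n + 1 : ℝ) * n.factorial) * D * |(v:ℝ) - t₀| ^ (n+1) := by
              field_simp; ring
      exact max_le (e1.trans goal1) (e2.trans goal2)
  -- contraction of an iterate
  have hvt : ∀ v : Icc α β, |(v:ℝ) - t₀| ≤ β - α := by
    intro v
    rw [abs_le]
    constructor <;> [linarith [v.2.1, ht₀.2]; linarith [v.2.2, ht₀.1]]
  have dist_bound : ∀ (n : ℕ) (f g : ContinuousMap (Icc α β) (ℝ × ℝ)),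
      dist ((T^[n]) f) ((T^[n]) g) ≤ (L * (β - α)) ^ n / n.factorial * dist f g := by
    intro n f g
    have hd0 : (0:ℝ) ≤ dist f g := dist_nonneg
    have hba : (0:ℝ) ≤ β - α := by linarith
    rw [ContinuousMap.dist_le (by positivity)]
    intro v
    calc dist ((T^[n]) f v) ((T^[n]) g v)
        ≤ L ^ n / n.factorial * dist f g * |(v : ℝ) - t₀| ^ n := key n f g v
      _ ≤ L ^ n / n.factorial * dist f g * (β - α) ^ n := by
          apply mul_le_mul_of_nonneg_left
            (pow_le_pow_left₀ (abs_nonneg _) (hvt v) n) (by positivity)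
      _ = (L * (β - α)) ^ n / n.factorial * dist f g := by
          rw [mul_pow]; ring
  obtain ⟨n, hn⟩ : ∃ n : ℕ, (L * (β - α)) ^ n / n.factorial < 1 :=
    ((FloorSemiring.tendsto_pow_div_factorial_atTop (L * (β - α))).eventually_lt_const
      (by norm_num : (0:ℝ) < 1)).exists
  have hcnn : (0:ℝ) ≤ (L * (β - α)) ^ n / n.factorial :=
    div_nonneg (pow_nonneg (mul_nonneg hL0 (by linarith)) _) (Nat.cast_nonneg _)
  set c : NNReal := ⟨(L * (β - α)) ^ n / n.factorial, hcnn⟩ with hc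
  have hcontr : ContractingWith c (T^[n]) := by
    constructor
    · exact_mod_cast hn
    · exact LipschitzWith.of_dist_le_mul fun f g => dist_bound n f g
  have : Nonempty (ContinuousMap (Icc α β) (ℝ × ℝ)) := ⟨ContinuousMap.const _ (0, 0)⟩
  set x := ContractingWith.fixedPoint (T^[n]) hcontr with hx
  have hfixn : Function.IsFixedPt (T^[n]) x := hcontr.fixedPoint_isFixedPt
  have hfix : T x = x := by
    have h2 : Function.IsFixedPt (T^[n]) (T x) := by
      show (T^[n]) (T x) = T x
      rw [← Function.iterate_succ_apply, Function.iterate_succ_apply', hfixn]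
    exact hcontr.fixedPoint_unique' h2 hfixn
  -- assemble the solution
  refine ⟨fun v => 1 + ∫ s in t₀..v, F1 x s, fun v => K * ∫ s in t₀..v, F2 x s,
    continuous_const.add (hprim _ (hF1c x)), continuous_const.mul (hprim _ (hF2c x)), ?_, ?_⟩
  · intro v
    have : ∀ s : ℝ, (fun v => K * ∫ s in t₀..v, F2 x s) (projIcc α β hle s : ℝ)
          / h1 (projIcc α β hle s : ℝ) = F1 x s := by
      intro s
      have hmem := (projIcc α β hle s).2
      have hproj : projIcc α β hle ((projIcc α β hle s : ℝ)) = projIcc α β hle s := by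
        rw [projIcc_of_mem hle hmem]
      have hxs : x (projIcc α β hle s) = ((T x) (projIcc α β hle s) : ℝ × ℝ) := by rw [hfix]
      have : (x (projIcc α β hle s)).2 = K * ∫ u in t₀..((projIcc α β hle s : ℝ)), F2 x u := by
        rw [hxs]; simp only [hT, ContinuousMap.coe_mk]
      simp only [hF1]
      rw [this]
    simp only [this]
  · intro v
    have : ∀ s : ℝ, h2 (projIcc α β hle s : ℝ) *
          ((fun v => 1 + ∫ s in t₀..v, F1 x s) (projIcc α β hle s : ℝ)) = F2 x s := by
      intro s
      have hxs : x (projIcc α β hle s) = ((T x) (projIcc α β hle s) : ℝ × ℝ) := by rw [hfix]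
      have : (x (projIcc α β hle s)).1 = 1 + ∫ u in t₀..((projIcc α β hle s : ℝ)), F1 x u := by
        rw [hxs]; simp only [hT, ContinuousMap.coe_mk]
      simp only [hF2]
      rw [this]
    simp only [this]

lemma reg (α β : ℝ) (hαβ : α < β) (c0 : ℝ) (hc0 : 0 < c0) (h1 h2 : ℝ → ℝ)
    (hh1 : ContDiff ℝ (⊤:ℕ∞) h1) (hh2 : Continuous h2)
    (hh1c : ∀ v ∈ Icc α β, c0 ≤ h1 v)
    (K : ℝ) (Q P : ℝ → ℝ)
    (hQd : ∀ v ∈ Icc α β, HasDerivAt Q (P v / h1 v) v)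
    (hPd : ∀ v ∈ Icc α β, HasDerivAt P (K * h2 v * Q v) v) :
    (∀ v ∈ Icc α β, derivWithin Q (Icc α β) v = P v / h1 v) ∧
    ContDiffOn ℝ 2 Q (Icc α β) ∧
    (∀ v ∈ Icc α β,
      derivWithin (fun w => h1 w * derivWithin Q (Icc α β) w) (Icc α β) v
        = K * h2 v * Q v) := by
  have hu := uniqueDiffOn_Icc hαβ
  have h1ne : ∀ v ∈ Icc α β, h1 v ≠ 0 := fun v hv => (lt_of_lt_of_le hc0 (hh1c v hv)).ne'
  have hA : ∀ v ∈ Icc α β, derivWithin Q (Icc α β) v = P v / h1 v := fun v hv =>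
    ((hQd v hv).hasDerivWithinAt).derivWithin (hu v hv)
  have hPdw : ∀ v ∈ Icc α β, derivWithin P (Icc α β) v = K * h2 v * Q v := fun v hv =>
    ((hPd v hv).hasDerivWithinAt).derivWithin (hu v hv)
  have hQc : ContinuousOn Q (Icc α β) := fun v hv =>
    (hQd v hv).continuousAt.continuousWithinAt
  have hQdiff : DifferentiableOn ℝ Q (Icc α β) := fun v hv =>
    ((hQd v hv).differentiableAt).differentiableWithinAt
  have hPdiff : DifferentiableOn ℝ P (Icc α β) := fun v hv =>
    ((hPd v hv).differentiableAt).differentiableWithinAt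
  have hP1 : ContDiffOn ℝ 1 P (Icc α β) := by
    have := (contDiffOn_succ_iff_derivWithin (n := 0) hu (f := P)).2
      ⟨hPdiff, by simp, by
        rw [contDiffOn_zero]
        exact ContinuousOn.congr ((continuousOn_const.mul hh2.continuousOn).mul hQc)
          (fun v hv => hPdw v hv)⟩
    rwa [zero_add] at this
  have hQ2 : ContDiffOn ℝ 2 Q (Icc α β) := by
    have h2eq : ((2:ℕ) : WithTop ℕ∞) = (1 : ℕ∞) + 1 := by norm_cast
    have := (contDiffOn_succ_iff_derivWithin (n := 1) hu (f := Q)).2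
      ⟨hQdiff, by simp, by
        refine ContDiffOn.congr ?_ (fun v hv => hA v hv)
        exact hP1.div ((hh1.contDiffOn).of_le (by exact_mod_cast le_top)) h1ne⟩
    simpa only [one_add_one_eq_two] using this
  refine ⟨hA, hQ2, fun v hv => ?_⟩
  have e : EqOn (fun w => h1 w * derivWithin Q (Icc α β) w) P (Icc α β) := by
    intro w hw
    simp only
    rw [hA w hw]
    field_simp [h1ne w hw]
  rw [derivWithin_congr e (e hv)]
  exact hPdw v hv

lemma master (α β : ℝ) (hαβ : α < β) (c0 : ℝ) (hc0 : 0 < c0)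
    (h1 h2 : ℝ → ℝ) (hh1 : Continuous h1) (hh2 : Continuous h2)
    (hh1c : ∀ v ∈ Icc α β, c0 ≤ h1 v)
    (K : ℝ) (hK : 0 < K) (t₀ : ℝ) (ht₀ : t₀ ∈ Icc α β) :
    ∃ Q P : ℝ → ℝ, Continuous Q ∧ Continuous P ∧ Q t₀ = 1 ∧ P t₀ = 0 ∧
      (∀ v, HasDerivAt Q
        (P (projIcc α β hαβ.le v : ℝ) / h1 (projIcc α β hαβ.le v : ℝ)) v) ∧
      (∀ v, HasDerivAt P
        (K * (h2 (projIcc α β hαβ.le v : ℝ) * Q (projIcc α β hαβ.le v : ℝ))) v) ∧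
      (∀ v, Q v = 1 + ∫ s in t₀..v,
        P (projIcc α β hαβ.le s : ℝ) / h1 (projIcc α β hαβ.le s : ℝ)) ∧
      (∀ v, P v = K * ∫ s in t₀..v,
        h2 (projIcc α β hαβ.le s : ℝ) * Q (projIcc α β hαβ.le s : ℝ)) := by
  obtain ⟨Q, P, hQc, hPc, hQ, hP⟩ :=
    exists_QP α β hαβ c0 hc0 h1 h2 hh1 hh2 hh1c K hK t₀ ht₀
  set hle := hαβ.le
  have hprc : Continuous (fun s : ℝ => (projIcc α β hle s : ℝ)) :=
    continuous_subtype_val.comp (continuous_projIcc)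
  have hh1pos : ∀ s : ℝ, 0 < h1 (projIcc α β hle s : ℝ) := fun s =>
    lt_of_lt_of_le hc0 (hh1c _ (projIcc α β hle s).2)
  have hGc : Continuous (fun s : ℝ =>
      P (projIcc α β hle s : ℝ) / h1 (projIcc α β hle s : ℝ)) :=
    (hPc.comp hprc).div (hh1.comp hprc) (fun s => (hh1pos s).ne')
  have hHc : Continuous (fun s : ℝ =>
      h2 (projIcc α β hle s : ℝ) * Q (projIcc α β hle s : ℝ)) :=
    (hh2.comp hprc).mul (hQc.comp hprc)
  have hQfun : Q = fun v => 1 + ∫ s in t₀..v,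
      P (projIcc α β hle s : ℝ) / h1 (projIcc α β hle s : ℝ) := funext hQ
  have hPfun : P = fun v => K * ∫ s in t₀..v,
      h2 (projIcc α β hle s : ℝ) * Q (projIcc α β hle s : ℝ) := funext hP
  refine ⟨Q, P, hQc, hPc, by rw [hQ t₀]; simp, by rw [hP t₀]; simp, ?_, ?_, hQ, hP⟩
  · intro v
    rw [hQfun]
    simpa using ((hGc.integral_hasStrictDerivAt t₀ v).hasDerivAt).const_add 1
  · intro v
    rw [hPfun]
    simpa using ((hHc.integral_hasStrictDerivAt t₀ v).hasDerivAt).const_mul K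

lemma pos_a (α β : ℝ) (hαβ : α < β) (K : ℝ) (hK : 0 < K)
    (Q P G H : ℝ → ℝ) (hQc : Continuous Q)
    (hQ : ∀ v, Q v = 1 + ∫ s in α..v, G s)
    (hP : ∀ v, P v = K * ∫ s in α..v, H s)
    (hH : ∀ v ∈ Icc α β, 0 ≤ Q v → 0 ≤ H v)
    (hG : ∀ v ∈ Icc α β, 0 ≤ P v → 0 ≤ G v) :
    ∀ v ∈ Icc α β, 1 ≤ Q v ∧ 0 ≤ P v := by
  have hQα : Q α = 1 := by rw [hQ α]; simp
  have Qpos : ∀ v ∈ Icc α β, 0 < Q v := by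
    by_contra hcon
    push_neg at hcon
    obtain ⟨v₀, hv₀, hv₀'⟩ := hcon
    set Z : Set ℝ := Icc α β ∩ Q ⁻¹' (Iic 0) with hZ
    have hZne : Z.Nonempty := ⟨v₀, hv₀, hv₀'⟩
    have hZc : IsClosed Z := isClosed_Icc.inter (isClosed_Iic.preimage hQc)
    have hbdd : BddBelow Z := ⟨α, fun z hz => hz.1.1⟩
    set m := sInf Z with hmdef
    have hm : m ∈ Z := hZc.csInf_mem hZne hbdd
    have hmIcc : m ∈ Icc α β := hm.1
    have hQm : Q m ≤ 0 := hm.2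
    have hlt : ∀ w ∈ Ico α m, 0 < Q w := by
      intro w hw
      by_contra h
      push_neg at h
      have hwZ : w ∈ Z := ⟨⟨hw.1, le_trans hw.2.le hmIcc.2⟩, h⟩
      exact absurd (csInf_le hbdd hwZ) (not_le.2 hw.2)
    have hQm0 : Q m = 0 := by
      rcases lt_or_ge (Q m) 0 with h | h
      · exfalso
        have hsub := intermediate_value_Icc' hmIcc.1 (hQc.continuousOn (s := Icc α m))
        have h0 : (0:ℝ) ∈ Icc (Q m) (Q α) := ⟨h.le, by rw [hQα]; norm_num⟩
        obtain ⟨w, hw, hQw⟩ := hsub h0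
        have hwZ : w ∈ Z := ⟨⟨hw.1, le_trans hw.2 hmIcc.2⟩, le_of_eq hQw⟩
        have : m ≤ w := csInf_le hbdd hwZ
        have hwm : w = m := le_antisymm hw.2 this
        rw [hwm] at hQw
        linarith
      · exact le_antisymm hQm h
    have hQnn : ∀ w ∈ Icc α m, 0 ≤ Q w := by
      intro w hw
      rcases eq_or_lt_of_le hw.2 with h | h
      · rw [h, hQm0]
      · exact (hlt w ⟨hw.1, h⟩).le
    have hPnn : ∀ s ∈ Icc α m, 0 ≤ P s := by
      intro s hs
      rw [hP s]
      apply mul_nonneg hK.le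
      apply intervalIntegral.integral_nonneg hs.1
      intro u hu
      have hum : u ∈ Icc α m := ⟨hu.1, le_trans hu.2 hs.2⟩
      exact hH u ⟨hu.1, le_trans hum.2 hmIcc.2⟩ (hQnn u hum)
    have : 1 ≤ Q m := by
      rw [hQ m]
      have : 0 ≤ ∫ s in α..m, G s := by
        apply intervalIntegral.integral_nonneg hmIcc.1
        intro u hu
        exact hG u ⟨hu.1, le_trans hu.2 hmIcc.2⟩ (hPnn u hu)
      linarith
    linarith
  intro v hv
  have hPnn : ∀ s ∈ Icc α β, 0 ≤ P s := by
    intro s hs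
    rw [hP s]
    apply mul_nonneg hK.le
    apply intervalIntegral.integral_nonneg hs.1
    intro u hu
    have : u ∈ Icc α β := ⟨hu.1, le_trans hu.2 hs.2⟩
    exact hH u this (Qpos u this).le
  refine ⟨?_, hPnn v hv⟩
  rw [hQ v]
  have : 0 ≤ ∫ s in α..v, G s := by
    apply intervalIntegral.integral_nonneg hv.1
    intro u hu
    have : u ∈ Icc α β := ⟨hu.1, le_trans hu.2 hv.2⟩
    exact hG u this (hPnn u this)
  linarith

lemma pos_b (α β : ℝ) (hαβ : α < β) (K : ℝ) (hK : 0 < K)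
    (Q P G H : ℝ → ℝ) (hQc : Continuous Q)
    (hQ : ∀ v, Q v = 1 + ∫ s in β..v, G s)
    (hP : ∀ v, P v = K * ∫ s in β..v, H s)
    (hH : ∀ v ∈ Icc α β, 0 ≤ Q v → 0 ≤ H v)
    (hG : ∀ v ∈ Icc α β, P v ≤ 0 → G v ≤ 0) :
    ∀ v ∈ Icc α β, 1 ≤ Q v ∧ P v ≤ 0 := by
  have hQβ : Q β = 1 := by rw [hQ β]; simp
  have hPle : ∀ s ∈ Icc α β, (∀ u ∈ Icc s β, 0 ≤ Q u) → P s ≤ 0 := by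
    intro s hs hQnn
    rw [hP s, intervalIntegral.integral_symm]
    have : 0 ≤ ∫ u in s..β, H u := by
      apply intervalIntegral.integral_nonneg hs.2
      intro u hu
      exact hH u ⟨le_trans hs.1 hu.1, hu.2⟩ (hQnn u hu)
    have hK' := hK.le
    nlinarith
  have Qpos : ∀ v ∈ Icc α β, 0 < Q v := by
    by_contra hcon
    push_neg at hcon
    obtain ⟨v₀, hv₀, hv₀'⟩ := hcon
    set Z : Set ℝ := Icc α β ∩ Q ⁻¹' (Iic 0) with hZ
    have hZne : Z.Nonempty := ⟨v₀, hv₀, hv₀'⟩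
    have hZc : IsClosed Z := isClosed_Icc.inter (isClosed_Iic.preimage hQc)
    have hbdd : BddAbove Z := ⟨β, fun z hz => hz.1.2⟩
    set m := sSup Z with hmdef
    have hm : m ∈ Z := hZc.csSup_mem hZne hbdd
    have hmIcc : m ∈ Icc α β := hm.1
    have hQm : Q m ≤ 0 := hm.2
    have hlt : ∀ w ∈ Ioc m β, 0 < Q w := by
      intro w hw
      by_contra h
      push_neg at h
      have hwZ : w ∈ Z := ⟨⟨le_trans hmIcc.1 hw.1.le, hw.2⟩, h⟩
      exact absurd (le_csSup hbdd hwZ) (not_le.2 hw.1)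
    have hQm0 : Q m = 0 := by
      rcases lt_or_ge (Q m) 0 with h | h
      · exfalso
        have hsub := intermediate_value_Icc hmIcc.2 (hQc.continuousOn (s := Icc m β))
        have h0 : (0:ℝ) ∈ Icc (Q m) (Q β) := ⟨h.le, by rw [hQβ]; norm_num⟩
        obtain ⟨w, hw, hQw⟩ := hsub h0
        have hwZ : w ∈ Z := ⟨⟨le_trans hmIcc.1 hw.1, hw.2⟩, le_of_eq hQw⟩
        have : w ≤ m := le_csSup hbdd hwZ
        have hwm : w = m := le_antisymm this hw.1
        rw [hwm] at hQw
        linarith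
      · exact le_antisymm hQm h
    have hQnn : ∀ w ∈ Icc m β, 0 ≤ Q w := by
      intro w hw
      rcases eq_or_lt_of_le hw.1 with h | h
      · rw [← h, hQm0]
      · exact (hlt w ⟨h, hw.2⟩).le
    have hPle' : ∀ s ∈ Icc m β, P s ≤ 0 := by
      intro s hs
      apply hPle s ⟨le_trans hmIcc.1 hs.1, hs.2⟩
      intro u hu
      exact hQnn u ⟨le_trans hs.1 hu.1, hu.2⟩
    have : 1 ≤ Q m := by
      rw [hQ m, intervalIntegral.integral_symm]
      have h0 : 0 ≤ ∫ s in m..β, -G s := by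
        apply intervalIntegral.integral_nonneg hmIcc.2
        intro u hu
        simpa using hG u ⟨le_trans hmIcc.1 hu.1, hu.2⟩ (hPle' u hu)
      rw [intervalIntegral.integral_neg] at h0
      linarith
    linarith
  intro v hv
  have hP0 : P v ≤ 0 := hPle v hv (fun u hu => (Qpos u ⟨le_trans hv.1 hu.1, hu.2⟩).le)
  refine ⟨?_, hP0⟩
  have hPle'' : ∀ s ∈ Icc α β, P s ≤ 0 := fun s hs =>
    hPle s hs (fun u hu => (Qpos u ⟨le_trans hs.1 hu.1, hu.2⟩).le)
  rw [hQ v, intervalIntegral.integral_symm]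
  have h0 : 0 ≤ ∫ s in v..β, -G s := by
    apply intervalIntegral.integral_nonneg hv.2
    intro u hu
    simpa using hG u ⟨le_trans hv.1 hu.1, hu.2⟩ (hPle'' u ⟨le_trans hv.1 hu.1, hu.2⟩)
  rw [intervalIntegral.integral_neg] at h0
  linarith

lemma uniq (α β : ℝ) (hαβ : α < β) (c0 : ℝ) (hc0 : 0 < c0)
    (h1 h2 : ℝ → ℝ) (hh1 : ContDiff ℝ (⊤:ℕ∞) h1) (hh2 : Continuous h2)
    (hh1c : ∀ v ∈ Icc α β, c0 ≤ h1 v)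
    (K : ℝ) (hK : 0 < K) (t₀ : ℝ)
    (Q P : ℝ → ℝ)
    (hQd : ∀ v ∈ Icc α β, HasDerivAt Q (P v / h1 v) v)
    (hPd : ∀ v ∈ Icc α β, HasDerivAt P (K * h2 v * Q v) v)
    (hQt : Q t₀ = 1) (hPt : P t₀ = 0)
    (ψ : ℝ → ℝ) (hψ2 : ContDiffOn ℝ 2 ψ (Icc α β)) (hψt : ψ t₀ = 1)
    (hψd0 : derivWithin ψ (Icc α β) t₀ = 0)
    (hode : ∀ v ∈ Icc α β,
      derivWithin (fun w => h1 w * derivWithin ψ (Icc α β) w) (Icc α β) v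
        = K * h2 v * ψ v)
    (ht : t₀ = α ∨ t₀ = β) :
    EqOn ψ Q (Icc α β) := by
  have hu := uniqueDiffOn_Icc hαβ
  have ht₀ : t₀ ∈ Icc α β := by
    rcases ht with h | h <;> rw [h]
    · exact left_mem_Icc.2 hαβ.le
    · exact right_mem_Icc.2 hαβ.le
  have h1pos : ∀ v ∈ Icc α β, 0 < h1 v := fun v hv => lt_of_lt_of_le hc0 (hh1c v hv)
  have hψ2' : ContDiffOn ℝ ((1:ℕ∞) + 1) ψ (Icc α β) := by convert hψ2 using 2; rfl
  obtain ⟨hψdiff, -, hDψ1⟩ := (contDiffOn_succ_iff_derivWithin hu).1 hψ2'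
  set Dψ := derivWithin ψ (Icc α β) with hDψ
  set πψ : ℝ → ℝ := fun w => h1 w * Dψ w with hπψ
  have hh1d : DifferentiableOn ℝ h1 (Icc α β) :=
    (hh1.differentiable (by simp)).differentiableOn
  have hπdiff : DifferentiableOn ℝ πψ (Icc α β) :=
    hh1d.mul (hDψ1.differentiableOn (by simp))
  have hπd : ∀ v ∈ Icc α β, HasDerivWithinAt πψ (K * h2 v * ψ v) (Icc α β) v := by
    intro v hv
    have := ((hπdiff v hv).hasDerivWithinAt)
    rwa [hode v hv] at this
  have hψdw : ∀ v ∈ Icc α β, HasDerivWithinAt ψ (πψ v / h1 v) (Icc α β) v := by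
    intro v hv
    have h := (hψdiff v hv).hasDerivWithinAt
    have e : derivWithin ψ (Icc α β) v = πψ v / h1 v := by
      rw [hπψ]
      field_simp [(h1pos v hv).ne']
      rfl
    rwa [e] at h
  set g : ℝ → ℝ × ℝ := fun v => (ψ v - Q v, πψ v - P v) with hg
  set g' : ℝ → ℝ × ℝ := fun x => ((πψ x - P x) / h1 x, K * h2 x * (ψ x - Q x)) with hg'
  have hgc : ContinuousOn g (Icc α β) := by
    apply ContinuousOn.prodMk
    · exact (hψ2.continuousOn).sub
        (fun v hv => (hQd v hv).continuousAt.continuousWithinAt)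
    · exact ((hh1.continuous.continuousOn.mul hDψ1.continuousOn)).sub
        (fun v hv => (hPd v hv).continuousAt.continuousWithinAt)
  have hgt : g t₀ = 0 := by
    rw [hg]
    have : πψ t₀ = 0 := by rw [hπψ]; simp [← hDψ, hψd0]
    simp [hψt, hQt, this, hPt, Prod.ext_iff]
  have hgd : ∀ x ∈ Icc α β, HasDerivWithinAt g (g' x) (Icc α β) x := by
    intro x hx
    apply HasDerivWithinAt.prodMk
    · have h := (hψdw x hx).sub ((hQd x hx).hasDerivWithinAt)
      have e : πψ x / h1 x - P x / h1 x = (πψ x - P x) / h1 x := (sub_div _ _ _).symm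
      rwa [e] at h
    · have h := (hπd x hx).sub ((hPd x hx).hasDerivWithinAt)
      have e : K * h2 x * ψ x - K * h2 x * Q x = K * h2 x * (ψ x - Q x) := by ring
      rwa [e] at h
  obtain ⟨M₂, hM₂⟩ := isCompact_Icc.exists_bound_of_continuousOn
    (hh2.continuousOn (s := Icc α β))
  have hM₂0 : 0 ≤ M₂ := le_trans (norm_nonneg _) (hM₂ α (left_mem_Icc.2 hαβ.le))
  set L : ℝ := max (1 / c0) (K * M₂) with hL
  have hbound : ∀ x ∈ Icc α β, ‖g' x‖ ≤ L * ‖g x‖ := by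
    intro x hx
    rw [hg', hg, Prod.norm_def, Prod.norm_def]
    simp only [Real.norm_eq_abs]
    have hgx0 : (0:ℝ) ≤ max |ψ x - Q x| |πψ x - P x| :=
      le_trans (abs_nonneg _) (le_max_left _ _)
    have hL0 : 0 ≤ L := le_trans (by positivity) (le_max_left _ _)
    apply max_le
    · rw [abs_div, abs_of_pos (h1pos x hx)]
      calc |πψ x - P x| / h1 x ≤ |πψ x - P x| / c0 :=
            div_le_div_of_nonneg_left (abs_nonneg _) hc0 (hh1c x hx)
        _ = (1 / c0) * |πψ x - P x| := by ring
        _ ≤ L * max |ψ x - Q x| |πψ x - P x| :=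
            mul_le_mul (le_max_left _ _) (le_max_right _ _) (abs_nonneg _) hL0
    · rw [abs_mul, abs_mul, abs_of_pos hK]
      calc K * |h2 x| * |ψ x - Q x| ≤ K * M₂ * |ψ x - Q x| := by
            apply mul_le_mul_of_nonneg_right _ (abs_nonneg _)
            exact mul_le_mul_of_nonneg_left (by simpa using hM₂ x hx) hK.le
        _ ≤ L * max |ψ x - Q x| |πψ x - P x| :=
            mul_le_mul (le_max_right _ _) (le_max_left _ _) (abs_nonneg _) hL0
  have hzero : ∀ x ∈ Icc α β, g x = 0 := by
    rcases ht with h | h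
    · subst h
      apply gronwall_zero_right (g' := g') hgc _ hgt
        (fun x hx => hbound x (Ico_subset_Icc_self hx))
      intro x hx
      exact (hgd x (Ico_subset_Icc_self hx)).mono_of_mem_nhdsWithin
        (Icc_mem_nhdsGE_of_mem hx)
    · subst h
      apply gronwall_zero_left (g' := g') hgc _ hgt
        (fun x hx => hbound x (Ioc_subset_Icc_self hx))
      intro x hx
      exact (hgd x (Ioc_subset_Icc_self hx)).mono_of_mem_nhdsWithin
        (Icc_mem_nhdsLE_of_mem hx)
  intro v hv
  have := hzero v hv
  rw [hg, Prod.ext_iff] at this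
  have h1' := this.1
  simpa [sub_eq_zero] using h1'

/-- existence, uniqueness, monotonicity, integral equation, and Wronskian
identity for the Sturm–Liouville solutions `𝔮_α` and `𝔮_β` on `[α,β]`. -/
theorem stmt14
    (α β : ℝ) (hαβ : α < β) (c0 : ℝ) (hc0 : 0 < c0)
    (h1 h2 : ℝ → ℝ)
    (hh1 : ContDiff ℝ (⊤ : ℕ∞) h1) (hh2 : ContDiff ℝ (⊤ : ℕ∞) h2)
    (hh1c : ∀ v ∈ Icc α β, c0 ≤ h1 v) (hh2c : ∀ v ∈ Icc α β, c0 ≤ h2 v)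
    (k : ℤ) (hk : k ≠ 0) :
    ∃ qa : ℝ → ℝ,
      (ContDiffOn ℝ 2 qa (Icc α β) ∧ qa α = 1 ∧ derivWithin qa (Icc α β) α = 0 ∧
        ∀ v ∈ Icc α β,
          derivWithin (fun w => h1 w * derivWithin qa (Icc α β) w) (Icc α β) v
            = (k:ℝ) ^ 2 * h2 v * qa v) ∧
      (∀ ψ : ℝ → ℝ,
        (ContDiffOn ℝ 2 ψ (Icc α β) ∧ ψ α = 1 ∧ derivWithin ψ (Icc α β) α = 0 ∧
          ∀ v ∈ Icc α β,
            derivWithin (fun w => h1 w * derivWithin ψ (Icc α β) w) (Icc α β) v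
              = (k:ℝ) ^ 2 * h2 v * ψ v) →
        EqOn ψ qa (Icc α β)) ∧
      (∀ v ∈ Icc α β, 1 ≤ qa v ∧ 0 ≤ derivWithin qa (Icc α β) v) ∧
      (∀ v ∈ Icc α β,
        qa v = 1 + (k:ℝ) ^ 2 * ∫ w in α..v, (h1 w)⁻¹ * ∫ w' in α..w, h2 w' * qa w') ∧
      ∃ qb : ℝ → ℝ,
        (ContDiffOn ℝ 2 qb (Icc α β) ∧ qb β = 1 ∧ derivWithin qb (Icc α β) β = 0 ∧
          ∀ v ∈ Icc α β,
            derivWithin (fun w => h1 w * derivWithin qb (Icc α β) w) (Icc α β) v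
              = (k:ℝ) ^ 2 * h2 v * qb v) ∧
        (∀ ψ : ℝ → ℝ,
          (ContDiffOn ℝ 2 ψ (Icc α β) ∧ ψ β = 1 ∧ derivWithin ψ (Icc α β) β = 0 ∧
            ∀ v ∈ Icc α β,
              derivWithin (fun w => h1 w * derivWithin ψ (Icc α β) w) (Icc α β) v
                = (k:ℝ) ^ 2 * h2 v * ψ v) →
          EqOn ψ qb (Icc α β)) ∧
        (∀ v ∈ Icc α β, 1 ≤ qb v ∧ derivWithin qb (Icc α β) v ≤ 0) ∧
        (∀ v ∈ Icc α β,
          h1 v * (qa v * derivWithin qb (Icc α β) v - derivWithin qa (Icc α β) v * qb v)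
            = h1 α * derivWithin qb (Icc α β) α) ∧
        h1 α * derivWithin qb (Icc α β) α = -(h1 β * derivWithin qa (Icc α β) β) ∧
        h1 α * derivWithin qb (Icc α β) α < 0 := by
  have hkR : (k:ℝ) ≠ 0 := Int.cast_ne_zero.mpr hk
  set K : ℝ := (k:ℝ) ^ 2 with hKdef
  have hK : 0 < K := by positivity
  set hle := hαβ.le
  have hαm : α ∈ Icc α β := left_mem_Icc.2 hle
  have hβm : β ∈ Icc α β := right_mem_Icc.2 hle
  have hpr : ∀ v ∈ Icc α β, (projIcc α β hle v : ℝ) = v := fun v hv =>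
    congrArg _ (projIcc_of_mem hle hv)
  have h1pos : ∀ v ∈ Icc α β, 0 < h1 v := fun v hv => lt_of_lt_of_le hc0 (hh1c v hv)
  have h2nn : ∀ v ∈ Icc α β, 0 ≤ h2 v := fun v hv => le_trans hc0.le (hh2c v hv)
  have hh1cont : Continuous h1 := hh1.continuous
  have hh2cont : Continuous h2 := hh2.continuous
  have hprc : Continuous (fun s : ℝ => (projIcc α β hle s : ℝ)) :=
    continuous_subtype_val.comp continuous_projIcc
  -- solutions from α and β
  obtain ⟨Qa, Pa, hQac, hPac, hQaα, hPaα, hQad', hPad', hQaInt, hPaInt⟩ :=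
    master α β hαβ c0 hc0 h1 h2 hh1cont hh2cont hh1c K hK α hαm
  obtain ⟨Qb, Pb, hQbc, hPbc, hQbβ, hPbβ, hQbd', hPbd', hQbInt, hPbInt⟩ :=
    master α β hαβ c0 hc0 h1 h2 hh1cont hh2cont hh1c K hK β hβm
  have hQad : ∀ v ∈ Icc α β, HasDerivAt Qa (Pa v / h1 v) v := fun v hv => by
    have := hQad' v; rwa [hpr v hv] at this
  have hPad : ∀ v ∈ Icc α β, HasDerivAt Pa (K * h2 v * Qa v) v := fun v hv => by
    have := hPad' v; rw [hpr v hv] at this; rwa [← mul_assoc] at this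
  have hQbd : ∀ v ∈ Icc α β, HasDerivAt Qb (Pb v / h1 v) v := fun v hv => by
    have := hQbd' v; rwa [hpr v hv] at this
  have hPbd : ∀ v ∈ Icc α β, HasDerivAt Pb (K * h2 v * Qb v) v := fun v hv => by
    have := hPbd' v; rw [hpr v hv] at this; rwa [← mul_assoc] at this
  obtain ⟨hAa, hQa2, hODEa⟩ :=
    reg α β hαβ c0 hc0 h1 h2 hh1 hh2cont hh1c K Qa Pa hQad hPad
  obtain ⟨hAb, hQb2, hODEb⟩ :=
    reg α β hαβ c0 hc0 h1 h2 hh1 hh2cont hh1c K Qb Pb hQbd hPbd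
  -- positivity / monotonicity
  have posa : ∀ v ∈ Icc α β, 1 ≤ Qa v ∧ 0 ≤ Pa v := by
    apply pos_a α β hαβ K hK Qa Pa _ _ hQac hQaInt hPaInt
    · intro v hv hQv
      rw [hpr v hv]
      exact mul_nonneg (h2nn v hv) hQv
    · intro v hv hPv
      rw [hpr v hv]
      exact div_nonneg hPv (h1pos v hv).le
  have posb : ∀ v ∈ Icc α β, 1 ≤ Qb v ∧ Pb v ≤ 0 := by
    apply pos_b α β hαβ K hK Qb Pb _ _ hQbc hQbInt hPbInt
    · intro v hv hQv
      rw [hpr v hv]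
      exact mul_nonneg (h2nn v hv) hQv
    · intro v hv hPv
      rw [hpr v hv]
      exact div_nonpos_of_nonpos_of_nonneg hPv (h1pos v hv).le
  -- endpoint derivatives
  have hdQaα : derivWithin Qa (Icc α β) α = 0 := by rw [hAa α hαm, hPaα, zero_div]
  have hdQbβ : derivWithin Qb (Icc α β) β = 0 := by rw [hAb β hβm, hPbβ, zero_div]
  -- the Wronskian
  set W : ℝ → ℝ := fun v => Qa v * Pb v - Pa v * Qb v with hW
  have hWd : ∀ x ∈ Icc α β, HasDerivAt W 0 x := by
    intro x hx
    have h := ((hQad x hx).mul (hPbd x hx)).sub ((hPad x hx).mul (hQbd x hx))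
    have e : Pa x / h1 x * Pb x + Qa x * (K * h2 x * Qb x)
        - (K * h2 x * Qa x * Qb x + Pa x * (Pb x / h1 x)) = 0 := by ring
    rw [e] at h
    exact h
  have hWconst : ∀ x ∈ Icc α β, W x = W α := by
    apply constant_of_has_deriv_right_zero
      (fun x hx => (hWd x hx).continuousAt.continuousWithinAt)
    intro x hx
    exact (hWd x (Ico_subset_Icc_self hx)).hasDerivWithinAt
  have hWα : W α = Pb α := by rw [hW]; simp [hQaα, hPaα]
  have hWβ : W β = -Pa β := by rw [hW]; simp [hQbβ, hPbβ]
  -- negativity of Pb α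
  have hPbαneg : Pb α < 0 := by
    have hHb : ∀ s ∈ Icc α β, c0 ≤ h2 (projIcc α β hle s : ℝ) * Qb (projIcc α β hle s : ℝ) := by
      intro s hs
      rw [hpr s hs]
      calc c0 = c0 * 1 := (mul_one c0).symm
        _ ≤ h2 s * Qb s :=
          mul_le_mul (hh2c s hs) (posb s hs).1 zero_le_one (h2nn s hs)
    have hint : c0 * (β - α) ≤ ∫ s in α..β,
        h2 (projIcc α β hle s : ℝ) * Qb (projIcc α β hle s : ℝ) := by
      have hle' : (∫ _ in α..β, c0) ≤ ∫ s in α..β,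
          h2 (projIcc α β hle s : ℝ) * Qb (projIcc α β hle s : ℝ) := by
        apply intervalIntegral.integral_mono_on hle
          (intervalIntegrable_const)
          (((hh2cont.comp hprc).mul (hQbc.comp hprc)).intervalIntegrable _ _)
          hHb
      rwa [intervalIntegral.integral_const, smul_eq_mul, mul_comm] at hle'
    have := hPbInt α
    rw [intervalIntegral.integral_symm] at this
    have hpos : 0 < c0 * (β - α) := by
      apply mul_pos hc0; linarith
    nlinarith
  -- final assembly
  refine ⟨Qa, ⟨hQa2, hQaα, hdQaα, hODEa⟩, ?_, ?_, ?_, Qb, ⟨hQb2, hQbβ, hdQbβ, hODEb⟩,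
    ?_, ?_, ?_, ?_, ?_⟩
  · -- uniqueness at α
    rintro ψ ⟨h₁, h₂, h₃, h₄⟩
    exact uniq α β hαβ c0 hc0 h1 h2 hh1 hh2cont hh1c K hK α Qa Pa hQad hPad hQaα hPaα
      ψ h₁ h₂ h₃ h₄ (Or.inl rfl)
  · -- monotonicity a
    intro v hv
    refine ⟨(posa v hv).1, ?_⟩
    rw [hAa v hv]
    exact div_nonneg (posa v hv).2 (h1pos v hv).le
  · -- integral equation
    intro v hv
    rw [hQaInt v]
    congr 1
    have hEq : EqOn (fun s => Pa (projIcc α β hle s : ℝ) / h1 (projIcc α β hle s : ℝ))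
        (fun w => K * ((h1 w)⁻¹ * ∫ w' in α..w, h2 w' * Qa w')) (uIcc α v) := by
      intro s hs
      rw [uIcc_of_le hv.1] at hs
      have hsm : s ∈ Icc α β := ⟨hs.1, le_trans hs.2 hv.2⟩
      simp only
      rw [hpr s hsm, hPaInt s]
      have hinner : (∫ w' in α..s, h2 (projIcc α β hle w' : ℝ) * Qa (projIcc α β hle w' : ℝ))
          = ∫ w' in α..s, h2 w' * Qa w' := by
        apply intervalIntegral.integral_congr
        intro w' hw'
        rw [uIcc_of_le hs.1] at hw'
        have : w' ∈ Icc α β := ⟨hw'.1, le_trans hw'.2 hsm.2⟩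
        simp only
        rw [hpr w' this]
      rw [hinner]
      field_simp
    rw [intervalIntegral.integral_congr hEq, intervalIntegral.integral_const_mul]
  · -- uniqueness at β
    rintro ψ ⟨h₁, h₂, h₃, h₄⟩
    exact uniq α β hαβ c0 hc0 h1 h2 hh1 hh2cont hh1c K hK β Qb Pb hQbd hPbd hQbβ hPbβ
      ψ h₁ h₂ h₃ h₄ (Or.inr rfl)
  · -- monotonicity b
    intro v hv
    refine ⟨(posb v hv).1, ?_⟩
    rw [hAb v hv]
    exact div_nonpos_of_nonpos_of_nonneg (posb v hv).2 (h1pos v hv).le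
  · -- Wronskian identity
    intro v hv
    rw [hAa v hv, hAb v hv, hAb α hαm]
    have h1v := (h1pos v hv).ne'
    have h1α := (h1pos α hαm).ne'
    have : h1 v * (Qa v * (Pb v / h1 v) - Pa v / h1 v * Qb v) = W v := by
      rw [hW]; field_simp
    rw [this, hWconst v hv, hWα]
    field_simp
  · -- equality of the two boundary expressions
    rw [hAb α hαm, hAa β hβm]
    have h1α := (h1pos α hαm).ne'
    have h1β := (h1pos β hβm).ne'
    have e1 : h1 α * (Pb α / h1 α) = Pb α := by field_simp
    have e2 : h1 β * (Pa β / h1 β) = Pa β := by field_simp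
    rw [e1, e2, ← hWα, ← hWconst β hβm, hWβ]
  · -- negativity
    rw [hAb α hαm]
    have h1α := (h1pos α hαm).ne'
    have e1 : h1 α * (Pb α / h1 α) = Pb α := by field_simp
    rw [e1]
    exact hPbαneg
end

section
/- There exists a constant C ≥ 1, depending only on the lower bound c0 and on the supremum norms of h1, h2 and h1' (in particular independent of the nonzero integer k), such that for all v ∈ [α,β]: C^{-1} |k| min(|k|(v − α), 1) ≤ 𝔮_α'(v)/𝔮_α(v) ≤ C |k| min(|k|(v − α), 1), and C^{-1} e^{|k|(v − α)/C} ≤ 𝔮_α(v) ≤ e^{C|k|(v − α)}. -/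
open Set MeasureTheory

private lemma mono_aux {a b : ℝ} {f f' : ℝ → ℝ} (hf : ContinuousOn f (Icc a b))
    (hd : ∀ x ∈ Ioo a b, HasDerivAt f (f' x) x)
    (h0 : ∀ x ∈ Ioo a b, 0 ≤ f' x) : MonotoneOn f (Icc a b) := by
  apply monotoneOn_of_deriv_nonneg (convex_Icc a b) hf
  · rw [interior_Icc]; exact fun x hx => (hd x hx).differentiableAt.differentiableWithinAt
  · rw [interior_Icc]; exact fun x hx => (hd x hx).deriv ▸ h0 x hx

private lemma gronwall_aux {a b c : ℝ} {g g' : ℝ → ℝ}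
    (hg : ContinuousOn g (Icc a b))
    (hd : ∀ x ∈ Ioo a b, HasDerivAt g (g' x) x)
    (key : ∀ x ∈ Ioo a b, 0 ≤ c * g x + g' x) :
    MonotoneOn (fun v => Real.exp (c * (v - a)) * g v) (Icc a b) := by
  apply mono_aux (f' := fun x => Real.exp (c * (x - a)) * (c * g x + g' x))
  · exact ((Real.continuous_exp.comp (by fun_prop)).continuousOn).mul hg
  · intro x hx
    have he : HasDerivAt (fun v => Real.exp (c * (v - a))) (Real.exp (c * (x - a)) * c) x := by
      have h0 : HasDerivAt (fun v : ℝ => c * (v - a)) c x := by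
        simpa using ((hasDerivAt_id x).sub_const a).const_mul c
      exact (Real.hasDerivAt_exp _).comp x h0
    have := he.mul (hd x hx)
    exact this.congr_deriv (by ring)
  · intro x hx
    exact mul_nonneg (Real.exp_pos _).le (key x hx)

set_option maxHeartbeats 4000000

/-- bounds for `𝔮_α'/𝔮_α` and exponential bounds for `𝔮_α`,
uniformly in the nonzero integer `k`. -/
theorem stmt15
    (α β : ℝ) (hαβ : α < β) (c0 : ℝ) (hc0 : 0 < c0)
    (h1 h2 : ℝ → ℝ)
    (hh1 : ContDiff ℝ (⊤ : ℕ∞) h1) (hh2 : ContDiff ℝ (⊤ : ℕ∞) h2)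
    (hh1c : ∀ v ∈ Icc α β, c0 ≤ h1 v) (hh2c : ∀ v ∈ Icc α β, c0 ≤ h2 v) :
    ∃ C : ℝ, 1 ≤ C ∧
      ∀ k : ℤ, k ≠ 0 →
        ∀ qa : ℝ → ℝ,
          ContDiffOn ℝ 2 qa (Icc α β) → qa α = 1 → derivWithin qa (Icc α β) α = 0 →
          (∀ v ∈ Icc α β,
            derivWithin (fun w => h1 w * derivWithin qa (Icc α β) w) (Icc α β) v
              = (k:ℝ) ^ 2 * h2 v * qa v) →
          ∀ v ∈ Icc α β,
            C⁻¹ * |(k:ℝ)| * min (|(k:ℝ)| * (v - α)) 1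
                ≤ derivWithin qa (Icc α β) v / qa v ∧
            derivWithin qa (Icc α β) v / qa v
                ≤ C * |(k:ℝ)| * min (|(k:ℝ)| * (v - α)) 1 ∧
            C⁻¹ * Real.exp (|(k:ℝ)| * (v - α) / C) ≤ qa v ∧
            qa v ≤ Real.exp (C * |(k:ℝ)| * (v - α)) := by
  -- uniform bounds for h1, h2
  obtain ⟨M1, hM1⟩ := isCompact_Icc.exists_bound_of_continuousOn
    (hh1.continuous.continuousOn (s := Icc α β))
  obtain ⟨M2, hM2⟩ := isCompact_Icc.exists_bound_of_continuousOn
    (hh2.continuous.continuousOn (s := Icc α β))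
  set m : ℝ := min c0 1 with hmdef
  set M : ℝ := max (max M1 M2) 1 with hMdef
  have hm0 : 0 < m := lt_min hc0 one_pos
  have hm1 : m ≤ 1 := min_le_right _ _
  have hM1' : 1 ≤ M := le_max_right _ _
  have hM0 : 0 < M := lt_of_lt_of_le one_pos hM1'
  have hmM : m ≤ M := hm1.trans hM1'
  have hh1l : ∀ v ∈ Icc α β, m ≤ h1 v := fun v hv => (min_le_left c0 1).trans (hh1c v hv)
  have hh2l : ∀ v ∈ Icc α β, m ≤ h2 v := fun v hv => (min_le_left c0 1).trans (hh2c v hv)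
  have hh1u : ∀ v ∈ Icc α β, h1 v ≤ M := fun v hv =>
    (le_abs_self _).trans (((hM1 v hv).trans ((le_max_left M1 M2).trans (le_max_left _ 1))))
  have hh2u : ∀ v ∈ Icc α β, h2 v ≤ M := fun v hv =>
    (le_abs_self _).trans (((hM2 v hv).trans ((le_max_right M1 M2).trans (le_max_left _ 1))))
  set E : ℝ := Real.exp (2 * M / m) with hEdef
  set C : ℝ := 4 * M / m * E with hCdef
  have hexp1 : (1:ℝ) ≤ E := by
    rw [hEdef, Real.one_le_exp_iff]; positivity
  have h4Mm : 0 < 4 * M / m := by positivity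
  have hC4 : 4 * M / m ≤ C := by
    calc 4 * M / m = 4 * M / m * 1 := (mul_one _).symm
    _ ≤ C := mul_le_mul_of_nonneg_left hexp1 h4Mm.le
  have hMm1 : 1 ≤ M / m := (one_le_div hm0).2 hmM
  have hC1 : 1 ≤ C := by
    have : (1:ℝ) ≤ 4 * M / m := by
      have : 4 * (M/m) = 4 * M / m := by ring
      linarith [hMm1]
    linarith
  have hC0 : 0 < C := lt_of_lt_of_le one_pos hC1
  have hCMm : M / m ≤ C := by
    have h : M / m ≤ 4 * M / m := by
      have h0 : (0:ℝ) ≤ M / m := by positivity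
      have hr : 4 * M / m = 4 * (M / m) := by ring
      rw [hr]; linarith
    linarith
  have hCinv4 : C⁻¹ ≤ m / (4 * M) := by
    rw [show m / (4 * M) = (4 * M / m)⁻¹ by rw [inv_div]]
    exact inv_anti₀ h4Mm hC4
  have hCinv2 : C⁻¹ ≤ m / (2 * M) := by
    refine hCinv4.trans ?_
    apply div_le_div_of_nonneg_left hm0.le (by positivity)
    linarith
  have hCinvE : C⁻¹ * E ≤ m / M := by
    have h : C⁻¹ * E = m / (4 * M) := by
      rw [hCdef]
      have hE0 : E ≠ 0 := by positivity
      field_simp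
    rw [h]
    apply div_le_div_of_nonneg_left hm0.le hM0
    linarith
  clear_value m M E C
  clear hmdef hMdef hCdef hM1 hM2
  refine ⟨C, hC1, ?_⟩
  intro k hk qa hqa hqa0 hq'0 hODE
  set I : Set ℝ := Icc α β with hIdef
  have hI : UniqueDiffOn ℝ I := uniqueDiffOn_Icc hαβ
  set K : ℝ := |(k:ℝ)| with hKdef
  have hK1 : (1:ℝ) ≤ K := by
    rw [hKdef, ← Int.cast_abs]
    exact_mod_cast Int.one_le_abs hk
  have hK0 : 0 < K := lt_of_lt_of_le one_pos hK1
  have hk2 : ((k:ℝ))^2 = K^2 := (sq_abs _).symm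
  set q' : ℝ → ℝ := derivWithin qa I with hq'def
  have hq'c1 : ContDiffOn ℝ 1 q' I := hqa.derivWithin hI (by norm_num)
  have hq'cont : ContinuousOn q' I := hq'c1.continuousOn
  have hqaD : ∀ v ∈ I, HasDerivWithinAt qa (q' v) I v := fun v hv =>
    ((hqa.differentiableOn (by norm_num)) v hv).hasDerivWithinAt
  have hqacont : ContinuousOn qa I := hqa.continuousOn
  set p : ℝ → ℝ := fun w => h1 w * q' w with hpdef
  have hpv : ∀ v, p v = h1 v * q' v := fun _ => rfl
  have hpcont : ContinuousOn p I := (hh1.continuous.continuousOn).mul hq'cont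
  have hpD : DifferentiableOn ℝ p I :=
    ((hh1.differentiable (by simp)).differentiableOn).mul
      (hq'c1.differentiableOn one_ne_zero)
  have hpd : ∀ v ∈ I, HasDerivWithinAt p ((k:ℝ)^2 * h2 v * qa v) I v := fun v hv => by
    have := (hpD v hv).hasDerivWithinAt
    rwa [hODE v hv] at this
  have hmem : ∀ x ∈ Ioo α β, I ∈ nhds x := fun x hx => Icc_mem_nhds hx.1 hx.2
  have hqaD' : ∀ x ∈ Ioo α β, HasDerivAt qa (q' x) x := fun x hx =>
    (hqaD x (Ioo_subset_Icc_self hx)).hasDerivAt (hmem x hx)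
  have hpd' : ∀ x ∈ Ioo α β, HasDerivAt p ((k:ℝ)^2 * h2 x * qa x) x := fun x hx =>
    (hpd x (Ioo_subset_Icc_self hx)).hasDerivAt (hmem x hx)
  have hpα : p α = 0 := by rw [hpv, hq'0, mul_zero]
  have hαI : α ∈ I := left_mem_Icc.2 hαβ.le
  clear_value K q' p
  clear hq'def hpdef hKdef
  -- Positivity of qa
  have hqpos : ∀ v ∈ I, 0 < qa v := by
    by_contra hcon
    push_neg at hcon
    obtain ⟨w, hwI, hw⟩ := hcon
    set N : Set ℝ := I ∩ qa ⁻¹' (Iic 0) with hNdef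
    have hNne : N.Nonempty := ⟨w, hwI, hw⟩
    have hNc : IsClosed N := by
      apply ContinuousOn.preimage_isClosed_of_isClosed hqacont isClosed_Icc isClosed_Iic
    have hNbdd : BddBelow N := ⟨α, fun x hx => hx.1.1⟩
    have hv0N : sInf N ∈ N := hNc.csInf_mem hNne hNbdd
    set v0 : ℝ := sInf N with hv0def
    have hv0I : v0 ∈ I := hv0N.1
    have hv0q : qa v0 ≤ 0 := hv0N.2
    have hαv0 : α < v0 := by
      rcases lt_or_eq_of_le hv0I.1 with h | h
      · exact h
      · exfalso; rw [← h, hqa0] at hv0q; linarith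
    have hlt : ∀ s, α ≤ s → s < v0 → 0 < qa s := by
      intro s hs1 hs2
      by_contra hns
      push_neg at hns
      have hsN : s ∈ N := ⟨⟨hs1, hs2.le.trans hv0I.2⟩, hns⟩
      exact absurd (csInf_le hNbdd hsN) (not_le.2 hs2)
    have hsub : Icc α v0 ⊆ I := Icc_subset_Icc le_rfl hv0I.2
    have hsub' : Ioo α v0 ⊆ Ioo α β := Ioo_subset_Ioo le_rfl hv0I.2
    have hpm : MonotoneOn p (Icc α v0) := by
      apply mono_aux (hpcont.mono hsub) (fun x hx => hpd' x (hsub' hx))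
      intro x hx
      have h2x := hh2l x (hsub (Ioo_subset_Icc_self hx))
      have hqx := hlt x hx.1.le hx.2
      exact mul_nonneg (mul_nonneg (sq_nonneg ((k:ℝ))) (le_trans hm0.le h2x)) hqx.le
    have hge : ∀ s ∈ Icc α v0, 0 ≤ p s := fun s hs => by
      have := hpm (left_mem_Icc.2 hαv0.le) hs hs.1
      rwa [hpα] at this
    have hq'ge0 : ∀ s ∈ Ioo α v0, 0 ≤ q' s := by
      intro s hs
      have h := hge s (Ioo_subset_Icc_self hs)
      rw [hpv] at h
      have h1s : 0 < h1 s := lt_of_lt_of_le hm0 (hh1l s (hsub (Ioo_subset_Icc_self hs)))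
      nlinarith
    have hqm : MonotoneOn qa (Icc α v0) :=
      mono_aux (hqacont.mono hsub) (fun x hx => hqaD' x (hsub' hx)) hq'ge0
    have := hqm (left_mem_Icc.2 hαv0.le) (right_mem_Icc.2 hαv0.le) hαv0.le
    rw [hqa0] at this
    linarith
  -- monotonicity of p and qa, nonnegativity
  have hpmono : MonotoneOn p I := by
    apply mono_aux hpcont hpd'
    intro x hx
    have hxI := Ioo_subset_Icc_self hx
    have h2x := hh2l x hxI
    have hqx := hqpos x hxI
    exact mul_nonneg (mul_nonneg (sq_nonneg ((k:ℝ))) (le_trans hm0.le h2x)) hqx.le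
  have hp0 : ∀ v ∈ I, 0 ≤ p v := fun v hv => by
    have := hpmono hαI hv hv.1
    rwa [hpα] at this
  have hq'nn : ∀ v ∈ I, 0 ≤ q' v := by
    intro v hv
    have h := hp0 v hv
    rw [hpv] at h
    have h1p : 0 < h1 v := lt_of_lt_of_le hm0 (hh1l v hv)
    nlinarith
  have hqamono : MonotoneOn qa I := by
    apply mono_aux hqacont hqaD'
    exact fun x hx => hq'nn x (Ioo_subset_Icc_self hx)
  have hqa1 : ∀ v ∈ I, 1 ≤ qa v := fun v hv => by
    have := hqamono hαI hv hv.1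
    rwa [hqa0] at this
  -- q' versus p
  have hq'le : ∀ v ∈ I, m * q' v ≤ p v := by
    intro v hv
    rw [hpv]
    exact mul_le_mul_of_nonneg_right (hh1l v hv) (hq'nn v hv)
  have hq'ge : ∀ v ∈ I, p v ≤ M * q' v := by
    intro v hv
    rw [hpv]
    exact mul_le_mul_of_nonneg_right (hh1u v hv) (hq'nn v hv)
  -- Gronwall upper bound : p ≤ K M qa
  have hpa : ∀ v ∈ I, p v ≤ K * M * qa v := by
    have hY : MonotoneOn (fun v => Real.exp (K * (v - α)) * (qa v - (K*M)⁻¹ * p v)) I := by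
      apply gronwall_aux (g' := fun x => q' x - (K*M)⁻¹ * ((k:ℝ)^2 * h2 x * qa x))
      · exact hqacont.sub (continuousOn_const.mul hpcont)
      · exact fun x hx => (hqaD' x hx).sub ((hpd' x hx).const_mul _)
      · intro x hx
        have hxI := Ioo_subset_Icc_self hx
        have h2u := hh2u x hxI
        have hqx := (hqpos x hxI).le
        have hpx := hp0 x hxI
        have hqq := hq'ge x hxI
        have hKM : (0:ℝ) < K * M := mul_pos hK0 hM0
        have e1 : (K*M)⁻¹ * ((k:ℝ)^2 * h2 x * qa x) ≤ K * qa x := by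
          rw [hk2]
          rw [inv_mul_le_iff₀ hKM]
          nlinarith [mul_le_mul_of_nonneg_left (mul_le_mul_of_nonneg_right h2u hqx)
            (sq_nonneg K)]
        have e2 : K * ((K*M)⁻¹ * p x) ≤ p x / M := by
          rw [div_eq_inv_mul, mul_inv]
          have : K * (K⁻¹ * M⁻¹ * p x) = M⁻¹ * p x := by
            field_simp
          rw [this]
        have e3 : p x / M ≤ q' x := by
          rw [div_le_iff₀ hM0]
          linarith [hqq]
        linarith [e1, e2, e3]
    intro v hv
    have h := hY hαI hv hv.1
    dsimp only at h
    have hα' : Real.exp (K*(α-α)) * (qa α - (K*M)⁻¹ * p α) = 1 := by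
      rw [hqa0, hpα]; simp
    rw [hα'] at h
    have hE1 := Real.exp_pos (K*(v-α))
    have hnn : 0 ≤ qa v - (K*M)⁻¹ * p v := by nlinarith
    have hKM : (0:ℝ) < K * M := mul_pos hK0 hM0
    rw [sub_nonneg, inv_mul_le_iff₀ hKM] at hnn
    linarith [hnn]
  -- Gronwall lower bound : qa ≤ (K m)⁻¹ p + 1
  have hpb : ∀ v ∈ I, qa v ≤ (K * m)⁻¹ * p v + 1 := by
    have hZ : MonotoneOn (fun v => Real.exp (K * (v - α)) * ((K*m)⁻¹ * p v - qa v)) I := by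
      apply gronwall_aux (g' := fun x => (K*m)⁻¹ * ((k:ℝ)^2 * h2 x * qa x) - q' x)
      · exact (continuousOn_const.mul hpcont).sub hqacont
      · exact fun x hx => ((hpd' x hx).const_mul _).sub (hqaD' x hx)
      · intro x hx
        have hxI := Ioo_subset_Icc_self hx
        have h2l := hh2l x hxI
        have hqx := (hqpos x hxI).le
        have hpx := hp0 x hxI
        have hqq := hq'le x hxI
        have hKm : (0:ℝ) < K * m := mul_pos hK0 hm0
        have e1 : K * qa x ≤ (K*m)⁻¹ * ((k:ℝ)^2 * h2 x * qa x) := by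
          rw [hk2, le_inv_mul_iff₀ hKm]
          nlinarith [mul_le_mul_of_nonneg_left (mul_le_mul_of_nonneg_right h2l hqx)
            (sq_nonneg K)]
        have e2 : p x / m ≤ K * ((K*m)⁻¹ * p x) := by
          rw [div_eq_inv_mul, mul_inv]
          have : K * (K⁻¹ * m⁻¹ * p x) = m⁻¹ * p x := by
            field_simp
          rw [this]
        have e3 : q' x ≤ p x / m := by
          rw [le_div_iff₀ hm0]
          linarith [hqq]
        linarith [e1, e2, e3]
    intro v hv
    have h := hZ hαI hv hv.1
    dsimp only at h
    have hα' : Real.exp (K*(α-α)) * ((K*m)⁻¹ * p α - qa α) = -1 := by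
      rw [hqa0, hpα]; simp
    rw [hα'] at h
    have hE1 : (1:ℝ) ≤ Real.exp (K*(v-α)) := by
      rw [Real.one_le_exp_iff]
      exact mul_nonneg hK0.le (sub_nonneg.2 hv.1)
    nlinarith [Real.exp_pos (K*(v-α))]
  -- linear lower bound for p
  have hplin : ∀ v ∈ I, K^2 * m * (v - α) ≤ p v := by
    have hP : MonotoneOn (fun s => p s - K^2 * m * (s - α)) I := by
      apply mono_aux (f' := fun x => (k:ℝ)^2 * h2 x * qa x - K^2 * m)
      · exact hpcont.sub (by fun_prop)
      · intro x hx
        exact (hpd' x hx).sub (by simpa using ((hasDerivAt_id x).sub_const α).const_mul (K^2*m))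
      · intro x hx
        have hxI := Ioo_subset_Icc_self hx
        have h2l := hh2l x hxI
        have hq1 := hqa1 x hxI
        rw [hk2]
        nlinarith [mul_le_mul_of_nonneg_left
          (mul_le_mul h2l hq1 zero_le_one (le_trans hm0.le h2l)) (sq_nonneg K)]
    intro v hv
    have h := hP hαI hv hv.1
    dsimp only at h
    simp only [hpα, sub_self, mul_zero, zero_sub] at h
    linarith
  -- linear upper bound for p
  have hpup : ∀ v ∈ I, p v ≤ K^2 * M * (v - α) * qa v := by
    intro v hv
    have hsub : Icc α v ⊆ I := Icc_subset_Icc le_rfl hv.2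
    have hsub' : Ioo α v ⊆ Ioo α β := Ioo_subset_Ioo le_rfl hv.2
    have hP : MonotoneOn (fun s => K^2 * M * qa v * (s - α) - p s) (Icc α v) := by
      apply mono_aux (f' := fun x => K^2 * M * qa v - (k:ℝ)^2 * h2 x * qa x)
      · exact ((continuous_const.mul (continuous_sub_right α)).continuousOn).sub
          (hpcont.mono hsub)
      · intro x hx
        have hlin : HasDerivAt (fun s : ℝ => K^2 * M * qa v * (s - α)) (K^2*M*qa v) x := by
          simpa using ((hasDerivAt_id x).sub_const α).const_mul (K^2*M*qa v)
        exact hlin.sub (hpd' x (hsub' hx))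
      · intro x hx
        have hxI := hsub (Ioo_subset_Icc_self hx)
        have h2u := hh2u x hxI
        have hqx := hqpos x hxI
        have hqm := hqamono hxI hv hx.2.le
        rw [hk2]
        nlinarith [mul_le_mul_of_nonneg_left (mul_le_mul h2u hqm hqx.le hM0.le) (sq_nonneg K)]
    rcases eq_or_lt_of_le hv.1 with h | h
    · rw [← h]
      simp [hpα]
    · have := hP (left_mem_Icc.2 h.le) (right_mem_Icc.2 h.le) h.le
      dsimp only at this
      simp only [hpα, sub_self, mul_zero, sub_zero, zero_sub] at this
      linarith
  -- exponential upper bound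
  have hexpub : ∀ v ∈ I, qa v ≤ Real.exp (M / m * K * (v - α)) := by
    have hU : MonotoneOn (fun v => Real.exp (-(M/m*K) * (v - α)) * (- qa v)) I := by
      apply gronwall_aux (g' := fun x => - q' x)
      · exact hqacont.neg
      · exact fun x hx => (hqaD' x hx).neg
      · intro x hx
        have hxI := Ioo_subset_Icc_self hx
        have hqq := hq'le x hxI
        have hpax := hpa x hxI
        have hqx := (hqpos x hxI).le
        have e1 : q' x ≤ M/m*K * qa x := by
          rw [div_mul_eq_mul_div, div_mul_eq_mul_div, le_div_iff₀ hm0]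
          linarith [hqq, hpax]
        linarith [e1]
    intro v hv
    have h := hU hαI hv hv.1
    dsimp only at h
    have hα' : Real.exp (-(M/m*K)*(α-α)) * (- qa α) = -1 := by rw [hqa0]; simp
    rw [hα'] at h
    -- h : -1 ≤ exp(-(M/m*K)(v-α)) * (-qa v)
    have h2 : Real.exp (-(M/m*K)*(v-α)) * qa v ≤ 1 := by linarith [h]
    have h3 := Real.exp_pos (-(M/m*K)*(v-α))
    have h4 : Real.exp (M/m*K*(v-α)) * (Real.exp (-(M/m*K)*(v-α)) * qa v)
        = qa v := by
      rw [← mul_assoc, ← Real.exp_add]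
      simp
    calc qa v = Real.exp (M/m*K*(v-α)) * (Real.exp (-(M/m*K)*(v-α)) * qa v) := h4.symm
    _ ≤ Real.exp (M/m*K*(v-α)) * 1 := by
        apply mul_le_mul_of_nonneg_left h2 (Real.exp_pos _).le
    _ = Real.exp (M/m*K*(v-α)) := mul_one _
  -- Riccati-type lower bound in the "large" region
  have hlarge : ∀ s ∈ I, 1 ≤ K * (s - α) → K * (m / (2*M)) * qa s ≤ q' s := by
    intro s hs hKs
    have hplins := hplin s hs
    have hx0 : 0 ≤ s - α := sub_nonneg.2 hs.1
    have hKm : (0:ℝ) < K * m := mul_pos hK0 hm0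
    have h1p : K * m ≤ p s := by
      nlinarith [mul_le_mul_of_nonneg_left hKs hKm.le]
    have h2' : (1:ℝ) ≤ (K*m)⁻¹ * p s := by
      rw [le_inv_mul_iff₀ hKm, mul_one]
      linarith
    have hqa2 : qa s ≤ 2 * ((K*m)⁻¹ * p s) := by
      linarith [hpb s hs]
    have hqge := hq'ge s hs
    have hJ : K * m * ((K*m)⁻¹ * p s) = p s := by
      field_simp
    rw [show K * (m/(2*M)) * qa s = K*m*qa s/(2*M) by ring,
      div_le_iff₀ (mul_pos two_pos hM0)]
    nlinarith [mul_le_mul_of_nonneg_left hqa2 hKm.le, hJ, hqge]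
  -- Now the conclusion
  intro v hv
  have hx0 : 0 ≤ v - α := sub_nonneg.2 hv.1
  have hqv : 0 < qa v := hqpos v hv
  have hqv1 : 1 ≤ qa v := hqa1 v hv
  have hmin0 : 0 ≤ min (K * (v - α)) 1 := le_min (mul_nonneg hK0.le hx0) zero_le_one
  have hminK : min (K * (v - α)) 1 ≤ K * (v - α) := min_le_left _ _
  have hmin1 : min (K * (v - α)) 1 ≤ 1 := min_le_right _ _
  have hCinv0 : (0:ℝ) < C⁻¹ := inv_pos.2 hC0
  refine ⟨?_, ?_, ?_, ?_⟩
  · -- lower Riccati bound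
    rw [le_div_iff₀ hqv]
    rcases le_or_gt (K * (v - α)) 2 with hc | hc
    · have hEv : qa v ≤ E := by
        refine (hexpub v hv).trans ?_
        rw [hEdef]
        apply Real.exp_le_exp.2
        rw [div_mul_eq_mul_div, div_mul_eq_mul_div, div_le_div_iff₀ hm0 hm0]
        nlinarith [mul_le_mul_of_nonneg_left hc (mul_pos hM0 hm0).le]
      have e1 : C⁻¹ * K * min (K*(v-α)) 1 * qa v ≤ C⁻¹ * K * (K*(v-α)) * E := by
        apply mul_le_mul ?_ hEv hqv.le ?_
        · apply mul_le_mul_of_nonneg_left hminK (mul_nonneg hCinv0.le hK0.le)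
        · have : 0 ≤ K*(v-α) := mul_nonneg hK0.le hx0
          exact mul_nonneg (mul_nonneg hCinv0.le hK0.le) this
      have e2 : C⁻¹ * K * (K*(v-α)) * E ≤ m / M * (K * (K*(v-α))) := by
        nlinarith [mul_le_mul_of_nonneg_right hCinvE
          (mul_nonneg hK0.le (mul_nonneg hK0.le hx0))]
      have e3 : m / M * (K * (K*(v-α))) ≤ q' v := by
        have h5 := hplin v hv
        have h6 := hq'ge v hv
        rw [div_mul_eq_mul_div, div_le_iff₀ hM0]
        linarith [h5, h6]
      linarith
    · have h7 := hlarge v hv (by linarith)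
      have e1 : C⁻¹ * K * min (K*(v-α)) 1 * qa v ≤ m / (2*M) * K * 1 * qa v := by
        apply mul_le_mul_of_nonneg_right ?_ hqv.le
        apply mul_le_mul ?_ hmin1 hmin0 ?_
        · exact mul_le_mul_of_nonneg_right hCinv2 hK0.le
        · exact mul_nonneg (div_nonneg hm0.le (by linarith)) hK0.le
      have e2 : m / (2*M) * K * 1 * qa v = K * (m/(2*M)) * qa v := by ring
      linarith [e2 ▸ e1]
  · -- upper Riccati bound
    rw [div_le_iff₀ hqv]
    have hq'm := hq'le v hv
    have hMCm : M ≤ C * m := by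
      rw [div_le_iff₀ hm0] at hCMm
      linarith
    rcases le_total (K * (v - α)) 1 with hc | hc
    · rw [min_eq_left hc]
      have h5 : m * q' v ≤ K^2*M*(v-α)*qa v := le_trans hq'm (hpup v hv)
      nlinarith [mul_le_mul_of_nonneg_right hMCm
        (mul_nonneg (mul_nonneg (sq_nonneg K) hx0) hqv.le)]
    · rw [min_eq_right hc]
      have h5 : m * q' v ≤ K*M*qa v := le_trans hq'm (hpa v hv)
      nlinarith [mul_le_mul_of_nonneg_right hMCm
        (mul_nonneg hK0.le hqv.le)]
  · -- exponential lower bound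
    rcases le_or_gt (K * (v - α)) 2 with hc | hc
    · have hC2 : (2:ℝ) ≤ C := by
        have : (2:ℝ) ≤ 4 * M / m := by
          have h : 4 * (M/m) = 4 * M / m := by ring
          linarith [hMm1]
        linarith
      have h7 : Real.exp (K*(v-α)/C) ≤ C := by
        have h8 : K*(v-α)/C ≤ 1 := by
          rw [div_le_one hC0]
          linarith
        calc Real.exp (K*(v-α)/C) ≤ Real.exp 1 := Real.exp_le_exp.2 h8
        _ ≤ 3 := by linarith [Real.exp_one_lt_d9]
        _ ≤ C := by
            have : (4:ℝ) ≤ 4 * M / m := by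
              have h : 4 * (M/m) = 4 * M / m := by ring
              linarith [hMm1]
            linarith
      calc C⁻¹ * Real.exp (K*(v-α)/C) ≤ C⁻¹ * C := by
            apply mul_le_mul_of_nonneg_left h7 hCinv0.le
      _ = 1 := inv_mul_cancel₀ hC0.ne'
      _ ≤ qa v := hqv1
    · -- large case : use the exponential growth from v1 = α + 1/K
      set v1 : ℝ := α + 1/K with hv1def
      have h8 : 1/K < v - α := by
        rw [div_lt_iff₀ hK0]
        nlinarith [hc]
      have hv1v : v1 < v := by rw [hv1def]; linarith
      have hv1β : v1 ≤ β := hv1v.le.trans hv.2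
      have hαv1 : α ≤ v1 := by
        rw [hv1def]
        have : (0:ℝ) ≤ 1/K := div_nonneg zero_le_one hK0.le
        linarith
      have hv1I : v1 ∈ I := ⟨hαv1, hv1β⟩
      have hsub : Icc v1 β ⊆ I := Icc_subset_Icc hαv1 le_rfl
      have hsub' : Ioo v1 β ⊆ Ioo α β := Ioo_subset_Ioo hαv1 le_rfl
      have hW : MonotoneOn (fun s => Real.exp (-(K*(m/(2*M))) * (s - v1)) * qa s)
          (Icc v1 β) := by
        apply gronwall_aux (g' := q')
        · exact hqacont.mono hsub
        · exact fun x hx => hqaD' x (hsub' hx)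
        · intro x hx
          have hxI : x ∈ I := hsub (Ioo_subset_Icc_self hx)
          have hx1 : 1 ≤ K * (x - α) := by
            have : (1:ℝ)/K < x - α := by
              have := hx.1
              rw [hv1def] at this
              linarith
            rw [div_lt_iff₀ hK0] at this
            nlinarith [this]
          have := hlarge x hxI hx1
          linarith
      have h9 := hW (left_mem_Icc.2 hv1β) ⟨hv1v.le, hv.2⟩ hv1v.le
      dsimp only at h9
      have hα' : Real.exp (-(K*(m/(2*M))) * (v1 - v1)) * qa v1 = qa v1 := by simp
      rw [hα'] at h9
      have h10 : 1 ≤ Real.exp (-(K*(m/(2*M))) * (v - v1)) * qa v :=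
        le_trans (hqa1 v1 hv1I) h9
      have h11 : Real.exp (K*(m/(2*M)) * (v - v1)) ≤ qa v := by
        have := mul_le_mul_of_nonneg_left h10 (Real.exp_pos (K*(m/(2*M)) * (v - v1))).le
        rw [mul_one, ← mul_assoc, ← Real.exp_add] at this
        simpa using this
      refine le_trans ?_ h11
      have h12 : K*(v-α)/C ≤ K*(m/(2*M)) * (v - v1) := by
        have hvv1 : (v - α)/2 ≤ v - v1 := by
          rw [hv1def]
          have : 2/K ≤ v - α := by rw [div_le_iff₀ hK0]; nlinarith [hc]
          have h1K : 1/K ≤ (v-α)/2 := by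
            rw [div_le_div_iff₀ hK0 two_pos]
            rw [div_le_iff₀ hK0] at this
            linarith [this]
          linarith
        have h13 : K*(v-α)/C ≤ K*(v-α) * (m/(4*M)) := by
          rw [div_eq_mul_inv]
          apply mul_le_mul_of_nonneg_left hCinv4 (mul_nonneg hK0.le hx0)
        refine h13.trans ?_
        have : K*(v-α) * (m/(4*M)) = K*(m/(2*M)) * ((v-α)/2) := by ring
        rw [this]
        apply mul_le_mul_of_nonneg_left hvv1
          (mul_nonneg hK0.le (div_nonneg hm0.le (by linarith)))
      calc C⁻¹ * Real.exp (K*(v-α)/C) ≤ 1 * Real.exp (K*(m/(2*M)) * (v - v1)) := by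
            apply mul_le_mul (by rw [inv_le_one_iff₀]; right; exact hC1)
              (Real.exp_le_exp.2 h12) (Real.exp_pos _).le zero_le_one
      _ = Real.exp (K*(m/(2*M)) * (v - v1)) := one_mul _
  · -- exponential upper bound
    refine (hexpub v hv).trans ?_
    apply Real.exp_le_exp.2
    have h14 : M/m * K ≤ C * K := mul_le_mul_of_nonneg_right hCMm hK0.le
    nlinarith [mul_le_mul_of_nonneg_right h14 hx0]
end
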